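/- arXiv:2104.14172 — 4 statements merged into one kernel-verified Lean document; each statement's English description precedes it below -/
import Mathlib

section
/- For any two finite simple graphs G1 and G2 on disjoint vertex sets, the average number of colors in the non-equivalent colorings of the join satisfies A(G1 + G2) = A(G1) + A(G2). -/
open Finset

/-- A partition of the vertex set of `G` into independent (stable) sets. -/
def IsStablePartition {V : Type*} [Fintype V] [DecidableEq V] (G : SimpleGraph V)
    (P : Finpartition (Finset.univ : Finset V)) : Prop :=
  ∀ p ∈ P.parts, ∀ u ∈ p, ∀ v ∈ p, ¬ G.Adj u v

/-- `colS G k` : number of non-equivalent colorings of `G` with exactly `k` colors. -/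
noncomputable def colS {V : Type*} [Fintype V] [DecidableEq V] (G : SimpleGraph V) (k : ℕ) : ℕ :=
  Set.ncard {P : Finpartition (Finset.univ : Finset V) |
    IsStablePartition G P ∧ P.parts.card = k}

/-- `colB G` : total number of non-equivalent colorings of `G`. -/
noncomputable def colB {V : Type*} [Fintype V] [DecidableEq V] (G : SimpleGraph V) : ℕ :=
  ∑ k ∈ Finset.range (Fintype.card V + 1), colS G k

/-- `colT G` : total number of color classes over all non-equivalent colorings of `G`. -/
noncomputable def colT {V : Type*} [Fintype V] [DecidableEq V] (G : SimpleGraph V) : ℕ :=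
  ∑ k ∈ Finset.range (Fintype.card V + 1), k * colS G k

/-- `colA G` : average number of colors in the non-equivalent colorings of `G`. -/
noncomputable def colA {V : Type*} [Fintype V] [DecidableEq V] (G : SimpleGraph V) : ℚ :=
  (colT G : ℚ) / (colB G : ℚ)

/-- Disjoint union of two graphs. -/
def graphUnion {V W : Type*} (G : SimpleGraph V) (H : SimpleGraph W) : SimpleGraph (V ⊕ W) where
  Adj a b := match a, b with
    | Sum.inl x, Sum.inl y => G.Adj x y
    | Sum.inr x, Sum.inr y => H.Adj x y
    | _, _ => False
  symm := by constructor; rintro (x|x) (y|y) h <;> first | exact h.symm | exact h.elim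
  loopless := by constructor; rintro (x|x) h <;> first | exact G.loopless.irrefl x h | exact H.loopless.irrefl x h

/-- Join of two graphs: disjoint union plus all cross edges. -/
def graphJoin {V W : Type*} (G : SimpleGraph V) (H : SimpleGraph W) : SimpleGraph (V ⊕ W) where
  Adj a b := match a, b with
    | Sum.inl x, Sum.inl y => G.Adj x y
    | Sum.inr x, Sum.inr y => H.Adj x y
    | _, _ => True
  symm := by constructor; rintro (x|x) (y|y) h <;> first | exact h.symm | trivial
  loopless := by constructor; rintro (x|x) h <;> first | exact G.loopless.irrefl x h | exact H.loopless.irrefl x h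

/-- Deletion of a vertex. -/
def deleteVertex {V : Type*} (G : SimpleGraph V) (v : V) : SimpleGraph {x : V // x ≠ v} :=
  G.induce {x : V | x ≠ v}


section SumPart

variable {V W : Type*} [Fintype V] [DecidableEq V] [Fintype W] [DecidableEq W]

/-- Combine partitions of `V` and `W` into a partition of `V ⊕ W`. -/
def sumPart (P1 : Finpartition (univ : Finset V)) (P2 : Finpartition (univ : Finset W)) :
    Finpartition (univ : Finset (V ⊕ W)) where
  parts := P1.parts.image (Finset.map (Function.Embedding.inl)) ∪
    P2.parts.image (Finset.map (Function.Embedding.inr))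
  supIndep := by
    rw [Finset.supIndep_iff_pairwiseDisjoint]
    rintro p hp q hq hpq
    simp only [coe_union, Set.mem_union, coe_image, Set.mem_image, mem_coe] at hp hq
    have cross : ∀ (a : Finset V) (b : Finset W),
        Disjoint (a.map Function.Embedding.inl) (b.map Function.Embedding.inr) := by
      intro a b
      rw [Finset.disjoint_left]
      rintro x hx hx'
      simp only [Finset.mem_map, Function.Embedding.inl_apply, Function.Embedding.inr_apply]
        at hx hx'
      obtain ⟨y, _, rfl⟩ := hx
      obtain ⟨z, _, h⟩ := hx'
      exact Sum.inl_ne_inr h.symm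
    obtain ⟨a, ha, rfl⟩ | ⟨a, ha, rfl⟩ := hp <;> obtain ⟨b, hb, rfl⟩ | ⟨b, hb, rfl⟩ := hq
    · have hab : a ≠ b := by rintro rfl; exact hpq rfl
      simp only [Function.onFun, id_eq]
      exact (Finset.disjoint_map _).2 (P1.disjoint ha hb hab)
    · simp only [Function.onFun, id_eq]
      exact cross a b
    · simp only [Function.onFun, id_eq]
      exact (cross b a).symm
    · have hab : a ≠ b := by rintro rfl; exact hpq rfl
      simp only [Function.onFun, id_eq]
      exact (Finset.disjoint_map _).2 (P2.disjoint ha hb hab)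
  sup_parts := by
    apply Finset.ext
    rintro (x | x) <;> simp only [Finset.mem_sup, mem_univ, iff_true]
    · obtain ⟨p, hp, hx⟩ := P1.exists_mem (mem_univ x)
      exact ⟨p.map Function.Embedding.inl, Finset.mem_union_left _ (mem_image_of_mem _ hp),
        Finset.mem_map.2 ⟨x, hx, rfl⟩⟩
    · obtain ⟨p, hp, hx⟩ := P2.exists_mem (mem_univ x)
      exact ⟨p.map Function.Embedding.inr, Finset.mem_union_right _ (mem_image_of_mem _ hp),
        Finset.mem_map.2 ⟨x, hx, rfl⟩⟩
  bot_notMem := by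
    simp only [bot_eq_empty, Finset.mem_union, mem_image, not_or, not_exists, not_and]
    constructor
    · intro a ha h
      rw [Finset.map_eq_empty] at h
      exact P1.bot_notMem (by rwa [bot_eq_empty, ← h])
    · intro a ha h
      rw [Finset.map_eq_empty] at h
      exact P2.bot_notMem (by rwa [bot_eq_empty, ← h])

lemma sumPart_parts_card (P1 : Finpartition (univ : Finset V))
    (P2 : Finpartition (univ : Finset W)) :
    (sumPart P1 P2).parts.card = P1.parts.card + P2.parts.card := by
  rw [sumPart]
  rw [Finset.card_union_of_disjoint, Finset.card_image_of_injective _ (Finset.map_injective _),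
    Finset.card_image_of_injective _ (Finset.map_injective _)]
  rw [Finset.disjoint_left]
  rintro p hp hq
  simp only [mem_image] at hp hq
  obtain ⟨a, ha, rfl⟩ := hp
  obtain ⟨b, hb, h⟩ := hq
  obtain ⟨x, hx⟩ := P1.nonempty_of_mem_parts ha
  have : Sum.inl x ∈ Finset.map Function.Embedding.inr b := by
    rw [h]; simpa using hx
  simp at this



lemma preimage_map_inl (s : Finset V) :
    ((s.map (Function.Embedding.inl : V ↪ V ⊕ W)).preimage Sum.inl
      Sum.inl_injective.injOn) = s := by
  ext x; simp

lemma preimage_map_inr (s : Finset W) :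
    ((s.map (Function.Embedding.inr : W ↪ V ⊕ W)).preimage Sum.inr
      Sum.inr_injective.injOn) = s := by
  ext x; simp

/-- Restrict a partition of `V ⊕ W` to `V`. -/
noncomputable def restLeft (P : Finpartition (univ : Finset (V ⊕ W))) : Finpartition (univ : Finset V) where
  parts := (P.parts.image fun p => p.preimage Sum.inl Sum.inl_injective.injOn).erase ∅
  supIndep := by
    rw [Finset.supIndep_iff_pairwiseDisjoint]
    rintro a ha b hb hab
    simp only [coe_erase, Set.mem_diff, coe_image, Set.mem_image, mem_coe] at ha hb
    obtain ⟨⟨p, hp, rfl⟩, -⟩ := ha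
    obtain ⟨⟨q, hq, rfl⟩, -⟩ := hb
    have hpq : p ≠ q := by rintro rfl; exact hab rfl
    simp only [Function.onFun, id_eq]
    rw [Finset.disjoint_left]
    intro x hx hx'
    rw [Finset.mem_preimage] at hx hx'
    exact (Finset.disjoint_left.1 (P.disjoint hp hq hpq)) hx hx'
  sup_parts := by
    apply Finset.ext
    intro x
    simp only [Finset.mem_sup, mem_univ, iff_true]
    obtain ⟨p, hp, hx⟩ := P.exists_mem (mem_univ (Sum.inl x))
    refine ⟨p.preimage Sum.inl Sum.inl_injective.injOn, ?_, by simp only [id_eq, Finset.mem_preimage]; exact hx⟩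
    rw [Finset.mem_erase]
    refine ⟨?_, mem_image_of_mem _ hp⟩
    intro h
    have : x ∈ p.preimage Sum.inl Sum.inl_injective.injOn := by rwa [Finset.mem_preimage]
    rw [h] at this
    exact absurd this (Finset.notMem_empty x)
  bot_notMem := by simp

/-- Restrict a partition of `V ⊕ W` to `W`. -/
noncomputable def restRight (P : Finpartition (univ : Finset (V ⊕ W))) : Finpartition (univ : Finset W) where
  parts := (P.parts.image fun p => p.preimage Sum.inr Sum.inr_injective.injOn).erase ∅
  supIndep := by
    rw [Finset.supIndep_iff_pairwiseDisjoint]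
    rintro a ha b hb hab
    simp only [coe_erase, Set.mem_diff, coe_image, Set.mem_image, mem_coe] at ha hb
    obtain ⟨⟨p, hp, rfl⟩, -⟩ := ha
    obtain ⟨⟨q, hq, rfl⟩, -⟩ := hb
    have hpq : p ≠ q := by rintro rfl; exact hab rfl
    simp only [Function.onFun, id_eq]
    rw [Finset.disjoint_left]
    intro x hx hx'
    rw [Finset.mem_preimage] at hx hx'
    exact (Finset.disjoint_left.1 (P.disjoint hp hq hpq)) hx hx'
  sup_parts := by
    apply Finset.ext
    intro x
    simp only [Finset.mem_sup, mem_univ, iff_true]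
    obtain ⟨p, hp, hx⟩ := P.exists_mem (mem_univ (Sum.inr x))
    refine ⟨p.preimage Sum.inr Sum.inr_injective.injOn, ?_, by simp only [id_eq, Finset.mem_preimage]; exact hx⟩
    rw [Finset.mem_erase]
    refine ⟨?_, mem_image_of_mem _ hp⟩
    intro h
    have : x ∈ p.preimage Sum.inr Sum.inr_injective.injOn := by rwa [Finset.mem_preimage]
    rw [h] at this
    exact absurd this (Finset.notMem_empty x)
  bot_notMem := by simp

lemma restLeft_sumPart (P1 : Finpartition (univ : Finset V))
    (P2 : Finpartition (univ : Finset W)) : restLeft (sumPart P1 P2) = P1 := by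
  apply Finpartition.ext
  apply Finset.ext
  intro a
  simp only [restLeft, sumPart, Finset.mem_erase, mem_image, Finset.mem_union]
  constructor
  · rintro ⟨hne, p, hp, rfl⟩
    obtain ⟨b, hb, rfl⟩ | ⟨b, hb, rfl⟩ := hp
    · rwa [preimage_map_inl]
    · exfalso
      apply hne
      ext x
      simp [Finset.mem_preimage]
  · intro ha
    refine ⟨?_, a.map Function.Embedding.inl, Or.inl ⟨a, ha, rfl⟩, preimage_map_inl a⟩
    rintro rfl
    exact P1.bot_notMem (by rwa [bot_eq_empty])

lemma restRight_sumPart (P1 : Finpartition (univ : Finset V))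
    (P2 : Finpartition (univ : Finset W)) : restRight (sumPart P1 P2) = P2 := by
  apply Finpartition.ext
  apply Finset.ext
  intro a
  simp only [restRight, sumPart, Finset.mem_erase, mem_image, Finset.mem_union]
  constructor
  · rintro ⟨hne, p, hp, rfl⟩
    obtain ⟨b, hb, rfl⟩ | ⟨b, hb, rfl⟩ := hp
    · exfalso
      apply hne
      ext x
      simp [Finset.mem_preimage]
    · rwa [preimage_map_inr]
  · intro ha
    refine ⟨?_, a.map Function.Embedding.inr, Or.inr ⟨a, ha, rfl⟩, preimage_map_inr a⟩
    rintro rfl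
    exact P2.bot_notMem (by rwa [bot_eq_empty])

variable {G1 : SimpleGraph V} {G2 : SimpleGraph W}

omit [Fintype V] [DecidableEq V] [Fintype W] [DecidableEq W] in
lemma join_adj_lr (x : V) (y : W) : (graphJoin G1 G2).Adj (Sum.inl x) (Sum.inr y) := trivial

lemma pure_part {P : Finpartition (univ : Finset (V ⊕ W))}
    (hP : IsStablePartition (graphJoin G1 G2) P) {p} (hp : p ∈ P.parts) :
    (∀ a ∈ p, ∃ x, a = Sum.inl x) ∨ (∀ a ∈ p, ∃ y, a = Sum.inr y) := by
  by_cases h : ∃ x, Sum.inl x ∈ p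
  · obtain ⟨x, hx⟩ := h
    left
    rintro (a | a) ha
    · exact ⟨a, rfl⟩
    · exact absurd (join_adj_lr x a) (hP p hp _ hx _ ha)
  · right
    rintro (a | a) ha
    · exact absurd ⟨a, ha⟩ h
    · exact ⟨a, rfl⟩

lemma sumPart_rest {P : Finpartition (univ : Finset (V ⊕ W))}
    (hP : IsStablePartition (graphJoin G1 G2) P) :
    sumPart (restLeft P) (restRight P) = P := by
  apply Finpartition.ext
  apply Finset.ext
  intro q
  have key : ∀ p ∈ P.parts, (∀ a ∈ p, ∃ x, a = Sum.inl x) →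
      (p.preimage Sum.inl Sum.inl_injective.injOn).map Function.Embedding.inl = p := by
    intro p hp hpure
    ext a
    simp only [Finset.mem_map, Finset.mem_preimage, Function.Embedding.inl_apply]
    constructor
    · rintro ⟨x, hx, rfl⟩; exact hx
    · intro ha
      obtain ⟨x, rfl⟩ := hpure a ha
      exact ⟨x, ha, rfl⟩
  have key' : ∀ p ∈ P.parts, (∀ a ∈ p, ∃ y, a = Sum.inr y) →
      (p.preimage Sum.inr Sum.inr_injective.injOn).map Function.Embedding.inr = p := by
    intro p hp hpure
    ext a
    simp only [Finset.mem_map, Finset.mem_preimage, Function.Embedding.inr_apply]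
    constructor
    · rintro ⟨x, hx, rfl⟩; exact hx
    · intro ha
      obtain ⟨x, rfl⟩ := hpure a ha
      exact ⟨x, ha, rfl⟩
  simp only [sumPart, restLeft, restRight, Finset.mem_union, mem_image, Finset.mem_erase]
  constructor
  · rintro (⟨a, ⟨hane, p, hp, rfl⟩, rfl⟩ | ⟨a, ⟨hane, p, hp, rfl⟩, rfl⟩)
    · have hpure : ∀ a ∈ p, ∃ x, a = Sum.inl x := by
        refine (pure_part hP hp).resolve_right ?_
        intro hpure
        apply hane
        ext x
        simp only [Finset.mem_preimage, Finset.notMem_empty, iff_false]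
        intro hx
        obtain ⟨y, hy⟩ := hpure _ hx
        simp at hy
      rw [key p hp hpure]
      exact hp
    · have hpure : ∀ a ∈ p, ∃ y, a = Sum.inr y := by
        refine (pure_part hP hp).resolve_left ?_
        intro hpure
        apply hane
        ext x
        simp only [Finset.mem_preimage, Finset.notMem_empty, iff_false]
        intro hx
        obtain ⟨y, hy⟩ := hpure _ hx
        simp at hy
      rw [key' p hp hpure]
      exact hp
  · intro hq
    obtain ⟨a, ha⟩ := P.nonempty_of_mem_parts hq
    obtain hpure | hpure := pure_part hP hq
    · left
      refine ⟨q.preimage Sum.inl Sum.inl_injective.injOn, ⟨?_, q, hq, rfl⟩, key q hq hpure⟩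
      obtain ⟨x, rfl⟩ := hpure a ha
      intro h
      have : x ∈ q.preimage Sum.inl Sum.inl_injective.injOn := by rwa [Finset.mem_preimage]
      rw [h] at this
      exact absurd this (Finset.notMem_empty x)
    · right
      refine ⟨q.preimage Sum.inr Sum.inr_injective.injOn, ⟨?_, q, hq, rfl⟩, key' q hq hpure⟩
      obtain ⟨x, rfl⟩ := hpure a ha
      intro h
      have : x ∈ q.preimage Sum.inr Sum.inr_injective.injOn := by rwa [Finset.mem_preimage]
      rw [h] at this
      exact absurd this (Finset.notMem_empty x)

lemma stable_sumPart_iff (P1 : Finpartition (univ : Finset V))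
    (P2 : Finpartition (univ : Finset W)) :
    IsStablePartition (graphJoin G1 G2) (sumPart P1 P2) ↔
      IsStablePartition G1 P1 ∧ IsStablePartition G2 P2 := by
  constructor
  · intro h
    constructor
    · intro p hp u hu v hv hadj
      refine h (p.map Function.Embedding.inl)
        (Finset.mem_union_left _ (mem_image_of_mem _ hp))
        (Sum.inl u) (Finset.mem_map.2 ⟨u, hu, rfl⟩)
        (Sum.inl v) (Finset.mem_map.2 ⟨v, hv, rfl⟩) hadj
    · intro p hp u hu v hv hadj
      refine h (p.map Function.Embedding.inr)
        (Finset.mem_union_right _ (mem_image_of_mem _ hp))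
        (Sum.inr u) (Finset.mem_map.2 ⟨u, hu, rfl⟩)
        (Sum.inr v) (Finset.mem_map.2 ⟨v, hv, rfl⟩) hadj
  · rintro ⟨h1, h2⟩ p hp u hu v hv hadj
    simp only [sumPart, Finset.mem_union, mem_image] at hp
    obtain ⟨a, ha, rfl⟩ | ⟨a, ha, rfl⟩ := hp
    · simp only [Finset.mem_map, Function.Embedding.inl_apply] at hu hv
      obtain ⟨x, hx, rfl⟩ := hu
      obtain ⟨y, hy, rfl⟩ := hv
      exact h1 a ha x hx y hy hadj
    · simp only [Finset.mem_map, Function.Embedding.inr_apply] at hu hv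
      obtain ⟨x, hx, rfl⟩ := hu
      obtain ⟨y, hy, rfl⟩ := hv
      exact h2 a ha x hx y hy hadj

end SumPart

section Count

variable {V : Type*} [Fintype V] [DecidableEq V] (G : SimpleGraph V)

open Classical in
lemma colS_eq (k : ℕ) :
    colS G k = #(univ.filter fun P : Finpartition (univ : Finset V) =>
      IsStablePartition G P ∧ P.parts.card = k) := by
  classical
  rw [colS, ← Set.ncard_coe_finset]
  congr 1
  ext P
  simp

open Classical in
lemma maps_to_range (P : Finpartition (univ : Finset V)) :
    P.parts.card ∈ Finset.range (Fintype.card V + 1) := by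
  rw [Finset.mem_range, Nat.lt_succ_iff, ← Finset.card_univ]
  exact P.card_parts_le_card

open Classical in
lemma colB_eq :
    colB G = #(univ.filter fun P : Finpartition (univ : Finset V) =>
      IsStablePartition G P) := by
  classical
  rw [colB,
    Finset.card_eq_sum_card_fiberwise (f := fun P : Finpartition (univ : Finset V) => P.parts.card)
      (t := Finset.range (Fintype.card V + 1)) (fun P _ => maps_to_range P)]
  refine Finset.sum_congr rfl fun k _ => ?_
  rw [colS_eq, Finset.filter_filter]

open Classical in
lemma colT_eq :
    colT G = ∑ P ∈ univ.filter fun P : Finpartition (univ : Finset V) =>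
      IsStablePartition G P, P.parts.card := by
  classical
  rw [colT,
    ← Finset.sum_fiberwise_of_maps_to (g := fun P : Finpartition (univ : Finset V) => P.parts.card)
      (t := Finset.range (Fintype.card V + 1)) (fun P _ => maps_to_range P)]
  refine Finset.sum_congr rfl fun k _ => ?_
  rw [colS_eq, ← Finset.filter_filter]
  rw [Finset.sum_congr rfl (fun P hP => ((Finset.mem_filter.1 hP).2 : P.parts.card = k))]
  rw [Finset.sum_const, smul_eq_mul, mul_comm]

lemma colB_pos : 0 < colB G := by
  classical
  rw [colB_eq]
  refine Finset.card_pos.2 ⟨⊥, Finset.mem_filter.2 ⟨mem_univ _, ?_⟩⟩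
  intro p hp u hu v hv hadj
  rw [Finpartition.mem_bot_iff] at hp
  obtain ⟨a, -, rfl⟩ := hp
  rw [Finset.mem_singleton] at hu hv
  subst hu; subst hv
  exact G.loopless.irrefl _ hadj

end Count

section Join

variable {V W : Type*} [Fintype V] [DecidableEq V] [Fintype W] [DecidableEq W]
  (G1 : SimpleGraph V) (G2 : SimpleGraph W)

open Classical in
lemma sum_join {M : Type*} [AddCommMonoid M]
    (g : Finpartition (univ : Finset (V ⊕ W)) → M) :
    ∑ P ∈ univ.filter fun P : Finpartition (univ : Finset (V ⊕ W)) =>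
        IsStablePartition (graphJoin G1 G2) P, g P =
      ∑ q ∈ (univ.filter fun P : Finpartition (univ : Finset V) => IsStablePartition G1 P) ×ˢ
          (univ.filter fun P : Finpartition (univ : Finset W) => IsStablePartition G2 P),
        g (sumPart q.1 q.2) := by
  classical
  refine Finset.sum_nbij' (fun P => (restLeft P, restRight P)) (fun q => sumPart q.1 q.2)
    ?_ ?_ ?_ ?_ ?_
  · intro P hP
    rw [Finset.mem_filter] at hP
    have h := hP.2
    have h' : IsStablePartition (graphJoin G1 G2) (sumPart (restLeft P) (restRight P)) := by
      rwa [sumPart_rest h]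
    rw [stable_sumPart_iff] at h'
    simp only [Finset.mem_product, Finset.mem_filter]
    exact ⟨⟨mem_univ _, h'.1⟩, ⟨mem_univ _, h'.2⟩⟩
  · intro q hq
    simp only [Finset.mem_product, Finset.mem_filter] at hq
    rw [Finset.mem_filter]
    exact ⟨mem_univ _, (stable_sumPart_iff _ _).2 ⟨hq.1.2, hq.2.2⟩⟩
  · intro P hP
    rw [Finset.mem_filter] at hP
    exact sumPart_rest hP.2
  · intro q hq
    exact Prod.ext (restLeft_sumPart _ _) (restRight_sumPart _ _)
  · intro P hP
    rw [Finset.mem_filter] at hP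
    rw [sumPart_rest hP.2]

open Classical in
lemma colB_join : colB (graphJoin G1 G2) = colB G1 * colB G2 := by
  classical
  rw [colB_eq, colB_eq, colB_eq]
  rw [Finset.card_eq_sum_ones, sum_join G1 G2 (fun _ => 1)]
  rw [← Finset.card_eq_sum_ones, Finset.card_product]

open Classical in
lemma colT_join :
    colT (graphJoin G1 G2) = colT G1 * colB G2 + colB G1 * colT G2 := by
  classical
  rw [colT_eq, colT_eq, colT_eq, colB_eq, colB_eq]
  rw [sum_join G1 G2 (fun P => P.parts.card)]
  rw [Finset.sum_congr rfl fun q _ => sumPart_parts_card q.1 q.2]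
  rw [Finset.sum_product]
  simp only [Finset.sum_add_distrib, Finset.sum_const, smul_eq_mul]
  rw [← Finset.mul_sum]
  ring

end Join

theorem stmt1 {V W : Type*} [Fintype V] [DecidableEq V] [Fintype W] [DecidableEq W]
    (G1 : SimpleGraph V) (G2 : SimpleGraph W) :
    colA (graphJoin G1 G2) = colA G1 + colA G2 := by
  have hB1 : (colB G1 : ℚ) ≠ 0 := Nat.cast_ne_zero.2 (colB_pos G1).ne'
  have hB2 : (colB G2 : ℚ) ≠ 0 := Nat.cast_ne_zero.2 (colB_pos G2).ne'
  rw [colA, colA, colA, colB_join, colT_join]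
  push_cast
  field_simp
end

section
/- If v is a vertex of degree at most 4 in a finite simple graph G, then A(G) > A(G − v). -/
open Finset

namespace ColAux

/-! ### Generic counting -/

section Generic

variable {W : Type*} [Fintype W] [DecidableEq W]

instance decStable (H : SimpleGraph W) [DecidableRel H.Adj] :
    DecidablePred (IsStablePartition H) := fun _ =>
  decidable_of_iff (∀ p ∈ _, ∀ u ∈ p, ∀ w ∈ p, ¬ H.Adj u w) Iff.rfl

/-- The finset of stable partitions of `H`. -/
def SP (H : SimpleGraph W) [DecidableRel H.Adj] : Finset (Finpartition (univ : Finset W)) :=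
  univ.filter (IsStablePartition H)

lemma mem_SP {H : SimpleGraph W} [DecidableRel H.Adj]
    {P : Finpartition (univ : Finset W)} : P ∈ SP H ↔ IsStablePartition H P := by
  simp [SP]

lemma colS_eq (H : SimpleGraph W) [DecidableRel H.Adj] (k : ℕ) :
    colS H k = ((SP H).filter (fun P => P.parts.card = k)).card := by
  have h : {P : Finpartition (univ : Finset W) | IsStablePartition H P ∧ P.parts.card = k}
      = ↑((SP H).filter (fun P => P.parts.card = k)) := by
    ext P
    simp [SP, Finset.mem_filter]
  rw [colS, h, Set.ncard_coe_finset]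

lemma maps_to_range (H : SimpleGraph W) [DecidableRel H.Adj] :
    ∀ P ∈ SP H, P.parts.card ∈ Finset.range (Fintype.card W + 1) := by
  intro P _
  rw [Finset.mem_range, Nat.lt_succ_iff, ← Finset.card_univ]
  exact P.card_parts_le_card

lemma colB_eq (H : SimpleGraph W) [DecidableRel H.Adj] : colB H = (SP H).card := by
  rw [colB]
  simp_rw [colS_eq]
  exact (Finset.card_eq_sum_card_fiberwise (maps_to_range H)).symm

lemma colT_eq (H : SimpleGraph W) [DecidableRel H.Adj] :
    colT H = ∑ P ∈ SP H, P.parts.card := by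
  rw [colT, ← Finset.sum_fiberwise_of_maps_to (maps_to_range H) (fun P => P.parts.card)]
  refine Finset.sum_congr rfl fun k _ => ?_
  rw [colS_eq, Finset.sum_congr rfl (fun P hP => (Finset.mem_filter.1 hP).2),
    Finset.sum_const, smul_eq_mul, mul_comm]

/-- Stability of a partition of an arbitrary finset w.r.t. a graph. -/
def StableParts (G : SimpleGraph W) {s : Finset W} (Q : Finpartition s) : Prop :=
  ∀ p ∈ Q.parts, ∀ a ∈ p, ∀ b ∈ p, ¬ G.Adj a b

instance decStableParts (G : SimpleGraph W) [DecidableRel G.Adj] {s : Finset W} :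
    DecidablePred (StableParts G (s := s)) := fun _ =>
  decidable_of_iff (∀ p ∈ _, ∀ a ∈ p, ∀ b ∈ p, ¬ G.Adj a b) Iff.rfl

/-- Splitting a non-singleton block of a stable partition. -/
lemma exists_card_succ {G : SimpleGraph W} {s : Finset W} (Q : Finpartition s)
    (hQ : StableParts G Q) (h : Q.parts.card < s.card) :
    ∃ R : Finpartition s, StableParts G R ∧ R.parts.card = Q.parts.card + 1 := by
  classical
  obtain ⟨p, hp, hcard2⟩ : ∃ p ∈ Q.parts, 2 ≤ p.card := by
    by_contra hcon
    push_neg at hcon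
    have hone : ∀ p ∈ Q.parts, p.card ≤ 1 := by
      intro p hp
      have h2 := hcon p hp
      omega
    have h3 := Q.sum_card_parts
    have h4 : ∑ p ∈ Q.parts, p.card ≤ Q.parts.card := by
      calc ∑ p ∈ Q.parts, p.card ≤ ∑ _p ∈ Q.parts, 1 := Finset.sum_le_sum hone
        _ = Q.parts.card := by simp
    omega
  obtain ⟨x, hxp, y, hyp, hyx⟩ := Finset.one_lt_card.1 (lt_of_lt_of_le one_lt_two hcard2)
  have hy_er : y ∈ p.erase x := Finset.mem_erase.2 ⟨hyx.symm, hyp⟩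
  have hpe_ne : (p.erase x).Nonempty := ⟨y, hy_er⟩
  have hdisj1 : ∀ q ∈ Q.parts.erase p, x ∉ q := by
    intro q hq hxq
    exact (Finset.mem_erase.1 hq).1 (Q.eq_of_mem_parts (Finset.mem_of_mem_erase hq) hp hxq hxp)
  have hdisj2 : ∀ q ∈ Q.parts.erase p, Disjoint (p.erase x) q := fun q hq =>
    (Q.disjoint hp (Finset.mem_of_mem_erase hq) (fun h =>
      (Finset.mem_erase.1 hq).1 h.symm)).mono_left (Finset.erase_subset _ _)
  have hnm1 : ({x} : Finset W) ∉ insert (p.erase x) (Q.parts.erase p) := by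
    intro h
    rcases Finset.mem_insert.1 h with h | h
    · exact absurd (h ▸ Finset.mem_singleton_self x) (fun hh => (Finset.mem_erase.1 hh).1 rfl)
    · exact hdisj1 _ h (Finset.mem_singleton_self x)
  have hnm2 : p.erase x ∉ Q.parts.erase p := fun h =>
    absurd hy_er (Finset.disjoint_left.1 (hdisj2 _ h) hy_er)
  have hpartsne : 1 ≤ Q.parts.card := Finset.card_pos.2 ⟨p, hp⟩
  have hsup : p ⊔ (Q.parts.erase p).sup id = s := by
    have := Q.sup_parts
    rwa [← Finset.insert_erase hp, Finset.sup_insert, id_eq] at this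
  refine ⟨⟨insert {x} (insert (p.erase x) (Q.parts.erase p)), ?_, ?_, ?_⟩, ?_, ?_⟩
  · rw [Finset.supIndep_iff_pairwiseDisjoint, Finset.coe_insert, Set.pairwiseDisjoint_insert,
      Finset.coe_insert, Set.pairwiseDisjoint_insert]
    refine ⟨⟨(Q.disjoint).subset (by simp [Finset.erase_subset]), ?_⟩, ?_⟩
    · intro q hq _
      exact hdisj2 q hq
    · intro q hq _
      rcases Set.mem_insert_iff.1 hq with rfl | hq
      · simp only [id_eq, Finset.disjoint_singleton_left]
        intro h
        exact (Finset.mem_erase.1 h).1 rfl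
      · simp only [id_eq, Finset.disjoint_singleton_left]
        exact hdisj1 q hq
  · rw [Finset.sup_insert, Finset.sup_insert, id_eq, id_eq, ← sup_assoc]
    have hx_join : ({x} : Finset W) ⊔ p.erase x = p := by
      rw [sup_eq_union, ← Finset.insert_eq, Finset.insert_erase hxp]
    rw [hx_join, hsup]
  · intro h
    rcases Finset.mem_insert.1 h with h | h
    · exact Finset.singleton_ne_empty _ h.symm
    rcases Finset.mem_insert.1 h with h | h
    · exact hpe_ne.ne_empty h.symm
    · exact Q.bot_notMem (Finset.mem_of_mem_erase h)
  · intro q hq a ha b hb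
    simp only [Finset.mem_insert] at hq
    rcases hq with rfl | rfl | hq
    · rw [Finset.mem_singleton] at ha hb
      rw [ha, hb]
      exact hQ p hp x hxp x hxp
    · exact hQ p hp a (Finset.mem_of_mem_erase ha) b (Finset.mem_of_mem_erase hb)
    · exact hQ q (Finset.mem_of_mem_erase hq) a ha b hb
  · rw [Finset.card_insert_of_notMem hnm1, Finset.card_insert_of_notMem hnm2,
      Finset.card_erase_of_mem hp]
    omega

end Generic

/-! ### The vertex-deletion setup -/

section Delete

variable {V : Type*} [Fintype V] [DecidableEq V] (G : SimpleGraph V) [DecidableRel G.Adj] (v : V)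

instance : DecidableRel (deleteVertex G v).Adj := fun a b =>
  decidable_of_iff (G.Adj a.1 b.1) Iff.rfl

/-- Stable partitions of the vertex set minus `v`. -/
def SPQ : Finset (Finpartition (univ.erase v)) :=
  univ.filter (StableParts G)

lemma mem_SPQ {Q : Finpartition (univ.erase v)} : Q ∈ SPQ G v ↔ StableParts G Q := by
  simp [SPQ]

lemma not_mem_of_subset_erase {p : Finset V} (hp : p ⊆ univ.erase v) : v ∉ p :=
  fun h => (mem_erase.1 (hp h)).1 rfl

lemma not_subset_singleton {c : Finset V} (hc : c ⊆ univ.erase v) (hne : c.Nonempty) :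
    ¬ c ⊆ {v} := by
  intro hsub
  obtain ⟨x, hx⟩ := hne
  exact (mem_erase.1 (hc hx)).1 (Finset.mem_singleton.1 (hsub hx))

lemma deleteVertex_adj {a b : {x : V // x ≠ v}} :
    (deleteVertex G v).Adj a b ↔ G.Adj a.1 b.1 := Iff.rfl

/-- Transfer a partition of the subtype to a partition of `univ.erase v`. -/
def up (P : Finpartition (univ : Finset {x : V // x ≠ v})) : Finpartition (univ.erase v) where
  parts := P.parts.image (fun t => t.map (Function.Embedding.subtype _))
  supIndep := by
    rw [Finset.supIndep_iff_pairwiseDisjoint]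
    rintro a ha b hb hab
    simp only [Finset.coe_image, Set.mem_image, Finset.mem_coe] at ha hb
    obtain ⟨t1, ht1, rfl⟩ := ha
    obtain ⟨t2, ht2, rfl⟩ := hb
    have hne : t1 ≠ t2 := by rintro rfl; exact hab rfl
    simpa only [Function.onFun, id_eq, Finset.disjoint_map] using P.disjoint ht1 ht2 hne
  sup_parts := by
    ext x
    rw [Finset.mem_sup]
    constructor
    · rintro ⟨t, ht, hx⟩
      obtain ⟨t0, _, rfl⟩ := Finset.mem_image.1 ht
      obtain ⟨y, _, rfl⟩ := Finset.mem_map.1 hx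
      exact Finset.mem_erase.2 ⟨y.2, Finset.mem_univ _⟩
    · intro hx
      have hx' : x ≠ v := (Finset.mem_erase.1 hx).1
      obtain ⟨t, ht, hxt⟩ := P.exists_mem (Finset.mem_univ ⟨x, hx'⟩)
      exact ⟨t.map (Function.Embedding.subtype _), Finset.mem_image_of_mem _ ht,
        Finset.mem_map.2 ⟨⟨x, hx'⟩, hxt, rfl⟩⟩
  bot_notMem := by
    intro h
    obtain ⟨t, ht, h0⟩ := Finset.mem_image.1 h
    have ht0 : t = ⊥ := by rwa [bot_eq_empty, Finset.map_eq_empty] at h0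
    exact P.bot_notMem (ht0 ▸ ht)

lemma up_parts (P : Finpartition (univ : Finset {x : V // x ≠ v})) :
    (up v P).parts = P.parts.image (fun t => t.map (Function.Embedding.subtype _)) := rfl

/-- Transfer a partition of `univ.erase v` to the subtype. -/
def down (Q : Finpartition (univ.erase v)) :
    Finpartition (univ : Finset {x : V // x ≠ v}) where
  parts := Q.parts.image (fun t => t.subtype (· ≠ v))
  supIndep := by
    rw [Finset.supIndep_iff_pairwiseDisjoint]
    rintro a ha b hb hab
    simp only [Finset.coe_image, Set.mem_image, Finset.mem_coe] at ha hb
    obtain ⟨t1, ht1, rfl⟩ := ha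
    obtain ⟨t2, ht2, rfl⟩ := hb
    have hne : t1 ≠ t2 := by rintro rfl; exact hab rfl
    have hd := Q.disjoint ht1 ht2 hne
    simp only [Function.onFun, id_eq]
    rw [Finset.disjoint_left]
    intro a ha1 ha2
    rw [Finset.mem_subtype] at ha1 ha2
    exact (Finset.disjoint_left.1 hd) ha1 ha2
  sup_parts := by
    ext x
    simp only [Finset.mem_univ, iff_true]
    rw [Finset.mem_sup]
    obtain ⟨t, ht, hxt⟩ := Q.exists_mem (Finset.mem_erase.2 ⟨x.2, Finset.mem_univ _⟩)
    exact ⟨t.subtype _, Finset.mem_image_of_mem _ ht, Finset.mem_subtype.2 hxt⟩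
  bot_notMem := by
    intro h
    obtain ⟨t, ht, h0⟩ := Finset.mem_image.1 h
    obtain ⟨y, hy⟩ := Q.nonempty_of_mem_parts ht
    have hyv : y ≠ v := (Finset.mem_erase.1 (Q.le ht hy)).1
    have hmem : (⟨y, hyv⟩ : {x : V // x ≠ v}) ∈ t.subtype (· ≠ v) := Finset.mem_subtype.2 hy
    rw [h0] at hmem
    exact absurd hmem (Finset.notMem_empty _)

lemma up_down (Q : Finpartition (univ.erase v)) : up v (down v Q) = Q := by
  apply Finpartition.ext
  rw [up_parts]
  show (Q.parts.image _).image _ = Q.parts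
  rw [Finset.image_image]
  have hcongr : Finset.image ((fun t => Finset.map (Function.Embedding.subtype
        fun x => x ≠ v) t) ∘ fun t => Finset.subtype (fun x => x ≠ v) t) Q.parts
      = Finset.image id Q.parts :=
    Finset.image_congr (fun t ht => Finset.subtype_map_of_mem
      (fun x hx => (Finset.mem_erase.1 (Q.le ht hx)).1))
  rw [hcongr, Finset.image_id]

lemma up_card (P : Finpartition (univ : Finset {x : V // x ≠ v})) :
    (up v P).parts.card = P.parts.card := by
  rw [up_parts]
  exact Finset.card_image_of_injective _ (Finset.map_injective _)

lemma up_inj {P1 P2 : Finpartition (univ : Finset {x : V // x ≠ v})}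
    (h : up v P1 = up v P2) : P1 = P2 := by
  apply Finpartition.ext
  have hparts := congrArg Finpartition.parts h
  rw [up_parts, up_parts] at hparts
  ext t
  constructor
  · intro ht
    have : t.map (Function.Embedding.subtype _) ∈
        P2.parts.image (fun t => t.map (Function.Embedding.subtype _)) := by
      rw [← hparts]; exact Finset.mem_image_of_mem _ ht
    obtain ⟨t2, ht2, heq⟩ := Finset.mem_image.1 this
    rwa [← Finset.map_injective _ heq]
  · intro ht
    have : t.map (Function.Embedding.subtype _) ∈
        P1.parts.image (fun t => t.map (Function.Embedding.subtype _)) := by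
      rw [hparts]; exact Finset.mem_image_of_mem _ ht
    obtain ⟨t2, ht2, heq⟩ := Finset.mem_image.1 this
    rwa [← Finset.map_injective _ heq]

lemma up_stable_iff (P : Finpartition (univ : Finset {x : V // x ≠ v})) :
    IsStablePartition (deleteVertex G v) P ↔ StableParts G (up v P) := by
  constructor
  · intro h q hq a ha b hb hadj
    obtain ⟨t, ht, rfl⟩ := Finset.mem_image.1 hq
    obtain ⟨a0, ha0, rfl⟩ := Finset.mem_map.1 ha
    obtain ⟨b0, hb0, rfl⟩ := Finset.mem_map.1 hb
    exact h t ht a0 ha0 b0 hb0 ((deleteVertex_adj G v).2 hadj)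
  · intro h t ht a0 ha0 b0 hb0 hadj
    exact h (t.map (Function.Embedding.subtype _)) (Finset.mem_image_of_mem _ ht)
      a0.1 (Finset.mem_map.2 ⟨a0, ha0, rfl⟩) b0.1 (Finset.mem_map.2 ⟨b0, hb0, rfl⟩)
      ((deleteVertex_adj G v).1 hadj)

lemma down_stable {Q : Finpartition (univ.erase v)} (hQ : StableParts G Q) :
    IsStablePartition (deleteVertex G v) (down v Q) := by
  rw [up_stable_iff, up_down]
  exact hQ

lemma colB_delete : colB (deleteVertex G v) = (SPQ G v).card := by
  rw [colB_eq]
  refine Finset.card_bij (fun P _ => up v P) ?_ ?_ ?_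
  · intro P hP
    exact (mem_SPQ G v).2 ((up_stable_iff G v P).1 (mem_SP.1 hP))
  · intro P1 h1 P2 h2 h
    exact up_inj v h
  · intro Q hQ
    exact ⟨down v Q, mem_SP.2 (down_stable G v ((mem_SPQ G v).1 hQ)), up_down v Q⟩

lemma colT_delete : colT (deleteVertex G v) = ∑ Q ∈ SPQ G v, Q.parts.card := by
  rw [colT_eq]
  refine Finset.sum_bij (fun P _ => up v P) ?_ ?_ ?_ ?_
  · intro P hP
    exact (mem_SPQ G v).2 ((up_stable_iff G v P).1 (mem_SP.1 hP))
  · intro P1 h1 P2 h2 h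
    exact up_inj v h
  · intro Q hQ
    exact ⟨down v Q, mem_SP.2 (down_stable G v ((mem_SPQ G v).1 hQ)), up_down v Q⟩
  · intro P hP
    exact (up_card v P).symm

/-- The free blocks of a partition: blocks with no neighbour of `v`. -/
def free (Q : Finpartition (univ.erase v)) : Finset (Finset V) :=
  Q.parts.filter (fun p => ∀ u ∈ p, ¬ G.Adj v u)

lemma a_le_k (Q : Finpartition (univ.erase v)) : (free G v Q).card ≤ Q.parts.card :=
  card_le_card (filter_subset _ _)

lemma k_sub_a_le_deg (Q : Finpartition (univ.erase v)) :
    Q.parts.card - (free G v Q).card ≤ G.degree v := by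
  classical
  have hsplit := Finset.card_filter_add_card_filter_not
    (s := Q.parts) (p := fun p => ∀ u ∈ p, ¬ G.Adj v u)
  set nf := Q.parts.filter (fun p => ¬ ∀ u ∈ p, ¬ G.Adj v u) with hnf
  have hle : nf.card ≤ G.degree v := by
    rw [← SimpleGraph.card_neighborFinset_eq_degree]
    apply Finset.card_le_card_of_injOn
      (f := fun p => if h : ∃ u ∈ p, G.Adj v u then h.choose else v)
    · intro p hp
      rw [hnf, Finset.mem_coe, Finset.mem_filter] at hp
      have hex : ∃ u ∈ p, G.Adj v u := by
        have := hp.2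
        push_neg at this
        exact this
      dsimp only [Finset.mem_coe]
      rw [dif_pos hex]
      exact (SimpleGraph.mem_neighborFinset G v _).2 hex.choose_spec.2
    · intro p1 h1 p2 h2 heq
      rw [Finset.mem_coe, hnf, Finset.mem_filter] at h1 h2
      have hex1 : ∃ u ∈ p1, G.Adj v u := by
        have := h1.2; push_neg at this; exact this
      have hex2 : ∃ u ∈ p2, G.Adj v u := by
        have := h2.2; push_neg at this; exact this
      simp only [] at heq
      rw [dif_pos hex1, dif_pos hex2] at heq
      exact Q.eq_of_mem_parts h1.1 h2.1 (heq ▸ hex1.choose_spec.1) hex2.choose_spec.1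
  have : (free G v Q).card + nf.card = Q.parts.card := hsplit
  omega

/-- Restriction of a partition of `univ` to `univ.erase v`. -/
def D (P : Finpartition (univ : Finset V)) : Finpartition (univ.erase v) :=
  (P.avoid {v}).copy (by rw [← erase_eq])

lemma mem_D_parts {P : Finpartition (univ : Finset V)} {c : Finset V} :
    c ∈ (D v P).parts ↔ ∃ d ∈ P.parts, ¬ d ⊆ {v} ∧ d.erase v = c := by
  simp only [D, Finpartition.copy_parts, Finpartition.mem_avoid, erase_eq, le_eq_subset]

lemma D_stable {P : Finpartition (univ : Finset V)} (hP : IsStablePartition G P) :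
    StableParts G (D v P) := by
  intro c hc a ha b hb
  rw [mem_D_parts] at hc
  obtain ⟨d, hd, -, rfl⟩ := hc
  exact hP d hd a (Finset.mem_of_mem_erase ha) b (Finset.mem_of_mem_erase hb)

/-- Extending a partition of `univ.erase v` by the singleton `{v}`. -/
def E0 (Q : Finpartition (univ.erase v)) : Finpartition (univ : Finset V) :=
  Q.extend (b := {v}) (by simp) (by simp) (by
    rw [sup_eq_union, union_comm, ← insert_eq, insert_erase (mem_univ v)])

lemma E0_parts (Q : Finpartition (univ.erase v)) : (E0 v Q).parts = insert {v} Q.parts := rfl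

/-- Extending a partition of `univ.erase v` by inserting `v` into block `p`. -/
def E1 (Q : Finpartition (univ.erase v)) (p : Finset V) (hp : p ∈ Q.parts) :
    Finpartition (univ : Finset V) where
  parts := insert (insert v p) (Q.parts.erase p)
  supIndep := by
    rw [Finset.supIndep_iff_pairwiseDisjoint, Finset.coe_insert, Set.pairwiseDisjoint_insert]
    refine ⟨(Q.disjoint).subset (by simp [Finset.erase_subset]), ?_⟩
    intro q hq _
    rw [Finset.mem_coe] at hq
    have hqQ : q ∈ Q.parts := Finset.mem_of_mem_erase hq
    have hvq : v ∉ q := not_mem_of_subset_erase v (Q.le hqQ)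
    simp only [id_eq]
    rw [Finset.disjoint_insert_left]
    refine ⟨hvq, Q.disjoint hp hqQ (fun h => (Finset.mem_erase.1 hq).1 h.symm)⟩
  sup_parts := by
    have hsup : p ⊔ (Q.parts.erase p).sup id = univ.erase v := by
      have := Q.sup_parts
      rwa [← Finset.insert_erase hp, Finset.sup_insert, id_eq] at this
    rw [Finset.sup_insert, id_eq, sup_eq_union, Finset.insert_union, ← sup_eq_union, hsup,
      Finset.insert_erase (Finset.mem_univ v)]
  bot_notMem := by
    intro h
    rcases Finset.mem_insert.1 h with h | h
    · exact Finset.insert_ne_empty _ _ h.symm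
    · exact Q.bot_notMem (Finset.mem_of_mem_erase h)

lemma E1_parts (Q : Finpartition (univ.erase v)) (p : Finset V) (hp : p ∈ Q.parts) :
    (E1 v Q p hp).parts = insert (insert v p) (Q.parts.erase p) := rfl

lemma D_E0 (Q : Finpartition (univ.erase v)) : D v (E0 v Q) = Q := by
  apply Finpartition.ext
  ext c
  rw [mem_D_parts v]
  simp only [E0_parts]
  constructor
  · rintro ⟨d, hd, hns, rfl⟩
    rcases Finset.mem_insert.1 hd with rfl | hd
    · exact absurd (Finset.Subset.refl _) hns
    · rwa [Finset.erase_eq_of_notMem (not_mem_of_subset_erase v (Q.le hd))]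
  · intro hc
    have hvc : v ∉ c := not_mem_of_subset_erase v (Q.le hc)
    exact ⟨c, Finset.mem_insert_of_mem hc,
      not_subset_singleton v (Q.le hc) (Q.nonempty_of_mem_parts hc),
      Finset.erase_eq_of_notMem hvc⟩

lemma D_E1 (Q : Finpartition (univ.erase v)) (p : Finset V) (hp : p ∈ Q.parts) :
    D v (E1 v Q p hp) = Q := by
  have hvp : v ∉ p := not_mem_of_subset_erase v (Q.le hp)
  apply Finpartition.ext
  ext c
  rw [mem_D_parts v]
  simp only [E1_parts]
  constructor
  · rintro ⟨d, hd, hns, rfl⟩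
    rcases Finset.mem_insert.1 hd with rfl | hd
    · rw [Finset.erase_insert hvp]
      exact hp
    · rw [Finset.erase_eq_of_notMem
        (not_mem_of_subset_erase v (Q.le (Finset.mem_of_mem_erase hd)))]
      exact Finset.mem_of_mem_erase hd
  · intro hc
    by_cases hcp : c = p
    · subst hcp
      refine ⟨insert v c, Finset.mem_insert_self _ _, ?_, Finset.erase_insert
        (not_mem_of_subset_erase v (Q.le hc))⟩
      intro hsub
      exact not_subset_singleton v (Q.le hc) (Q.nonempty_of_mem_parts hc)
        (fun x hx => hsub (Finset.mem_insert_of_mem hx))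
    · exact ⟨c, Finset.mem_insert_of_mem (Finset.mem_erase.2 ⟨hcp, hc⟩),
        not_subset_singleton v (Q.le hc) (Q.nonempty_of_mem_parts hc),
        Finset.erase_eq_of_notMem (not_mem_of_subset_erase v (Q.le hc))⟩

lemma E0_card (Q : Finpartition (univ.erase v)) :
    (E0 v Q).parts.card = Q.parts.card + 1 := by
  rw [E0_parts, Finset.card_insert_of_notMem]
  intro h
  exact not_mem_of_subset_erase v (Q.le h) (Finset.mem_singleton_self v)

lemma E1_card (Q : Finpartition (univ.erase v)) (p : Finset V) (hp : p ∈ Q.parts) :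
    (E1 v Q p hp).parts.card = Q.parts.card := by
  rw [E1_parts, Finset.card_insert_of_notMem, Finset.card_erase_of_mem hp]
  · have h1 : 1 ≤ Q.parts.card := Finset.card_pos.2 ⟨p, hp⟩
    omega
  · intro h
    exact not_mem_of_subset_erase v (Q.le (Finset.mem_of_mem_erase h))
      (Finset.mem_insert_self v p)

lemma E0_stable {Q : Finpartition (univ.erase v)} (hQ : StableParts G Q) :
    IsStablePartition G (E0 v Q) := by
  intro q hq a ha b hb
  rw [E0_parts, Finset.mem_insert] at hq
  rcases hq with rfl | hq
  · rw [Finset.mem_singleton] at ha hb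
    rw [ha, hb]
    exact G.loopless.irrefl v
  · exact hQ q hq a ha b hb

lemma E1_stable {Q : Finpartition (univ.erase v)} (hQ : StableParts G Q)
    {p : Finset V} (hp : p ∈ free G v Q) :
    IsStablePartition G (E1 v Q p (mem_of_mem_filter p hp)) := by
  have hfree : ∀ u ∈ p, ¬ G.Adj v u := (Finset.mem_filter.1 hp).2
  have hpQ : p ∈ Q.parts := mem_of_mem_filter p hp
  intro q hq a ha b hb
  rw [E1_parts, Finset.mem_insert] at hq
  rcases hq with rfl | hq
  · rcases Finset.mem_insert.1 ha with ha' | ha'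
    · rcases Finset.mem_insert.1 hb with hb' | hb'
      · rw [ha', hb']; exact G.loopless.irrefl v
      · rw [ha']; exact hfree b hb'
    · rcases Finset.mem_insert.1 hb with hb' | hb'
      · rw [hb']; exact fun hadj => hfree a ha' hadj.symm
      · exact hQ p hpQ a ha' b hb' 
  · exact hQ q (Finset.mem_of_mem_erase hq) a ha b hb

lemma fiber_eq {Q : Finpartition (univ.erase v)} (hQ : Q ∈ SPQ G v) :
    (SP G).filter (fun P => D v P = Q) =
      insert (E0 v Q)
        ((free G v Q).attach.image
          (fun p => E1 v Q p.1 (mem_of_mem_filter p.1 p.2))) := by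
  have hQs := (mem_SPQ G v).1 hQ
  ext P
  rw [Finset.mem_filter, mem_SP, Finset.mem_insert, Finset.mem_image]
  constructor
  · rintro ⟨hstab, rfl⟩
    have ht : P.part v ∈ P.parts := P.part_mem.2 (Finset.mem_univ v)
    have hvt : v ∈ P.part v := P.mem_part (Finset.mem_univ v)
    by_cases hts : P.part v = {v}
    · left
      apply Finpartition.ext
      rw [E0_parts]
      ext c
      constructor
      · intro hc
        by_cases hcv : v ∈ c
        · rw [P.eq_of_mem_parts hc ht hcv hvt, hts]
          exact Finset.mem_insert_self _ _
        · apply Finset.mem_insert_of_mem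
          rw [mem_D_parts]
          refine ⟨c, hc, ?_, Finset.erase_eq_of_notMem hcv⟩
          intro hsub
          obtain ⟨x, hx⟩ := P.nonempty_of_mem_parts hc
          exact hcv (Finset.mem_singleton.1 (hsub hx) ▸ hx)
      · intro hc
        rcases Finset.mem_insert.1 hc with rfl | hc
        · exact hts ▸ ht
        · rw [mem_D_parts] at hc
          obtain ⟨d, hd, hns, rfl⟩ := hc
          have hvd : v ∉ d := by
            intro hvd
            exact hns (by rw [P.eq_of_mem_parts hd ht hvd hvt, hts])
          rwa [Finset.erase_eq_of_notMem hvd]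
    · right
      have hpne : ¬ P.part v ⊆ {v} := fun hsub =>
        hts (Finset.Subset.antisymm hsub (Finset.singleton_subset_iff.2 hvt))
      have hpQ : (P.part v).erase v ∈ (D v P).parts := by
        rw [mem_D_parts]
        exact ⟨P.part v, ht, hpne, rfl⟩
      have hfree : (P.part v).erase v ∈ free G v (D v P) := by
        rw [free, Finset.mem_filter]
        exact ⟨hpQ, fun u hu hadj =>
          hstab _ ht v hvt u (Finset.mem_of_mem_erase hu) hadj⟩
      refine ⟨⟨_, hfree⟩, Finset.mem_attach _ _, ?_⟩
      apply Finpartition.ext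
      rw [E1_parts, Finset.insert_erase hvt]
      ext c
      constructor
      · intro hc
        rcases Finset.mem_insert.1 hc with rfl | hc
        · exact ht
        · rw [Finset.mem_erase] at hc
          obtain ⟨hcp, hc⟩ := hc
          rw [mem_D_parts] at hc
          obtain ⟨d, hd, hns, rfl⟩ := hc
          have hvd : v ∉ d := by
            intro hvd
            exact hcp (by rw [P.eq_of_mem_parts hd ht hvd hvt])
          rwa [Finset.erase_eq_of_notMem hvd]
      · intro hc
        by_cases hcv : v ∈ c
        · rw [P.eq_of_mem_parts hc ht hcv hvt]
          exact Finset.mem_insert_self _ _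
        · apply Finset.mem_insert_of_mem
          rw [Finset.mem_erase]
          constructor
          · intro hceq
            obtain ⟨y, hy, hyv⟩ : ∃ y ∈ P.part v, y ≠ v := by
              by_contra hcon
              push_neg at hcon
              exact hts (Finset.Subset.antisymm
                (fun z hz => Finset.mem_singleton.2 (hcon z hz))
                (Finset.singleton_subset_iff.2 hvt))
            have hy' : y ∈ (P.part v).erase v := Finset.mem_erase.2 ⟨hyv, hy⟩
            have hyc : y ∈ c := hceq ▸ hy'
            have hct := P.eq_of_mem_parts hc ht hyc hy
            exact hcv (hct ▸ hvt)
          · rw [mem_D_parts]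
            refine ⟨c, hc, ?_, Finset.erase_eq_of_notMem hcv⟩
            intro hsub
            obtain ⟨x, hx⟩ := P.nonempty_of_mem_parts hc
            exact hcv (Finset.mem_singleton.1 (hsub hx) ▸ hx)
  · rintro (rfl | ⟨p, -, rfl⟩)
    · exact ⟨E0_stable G v hQs, D_E0 v Q⟩
    · exact ⟨E1_stable G v hQs p.2, D_E1 v Q p.1 _⟩

lemma E0_ne_E1 (Q : Finpartition (univ.erase v)) (p : Finset V) (hp : p ∈ Q.parts) :
    E0 v Q ≠ E1 v Q p hp := by
  intro h
  have hparts := congrArg Finpartition.parts h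
  rw [E0_parts, E1_parts] at hparts
  have h1 : ({v} : Finset V) ∈ insert (insert v p) (Q.parts.erase p) :=
    hparts ▸ Finset.mem_insert_self _ _
  rcases Finset.mem_insert.1 h1 with h2 | h2
  · obtain ⟨x, hx⟩ := Q.nonempty_of_mem_parts hp
    have hxv : x ≠ v := (Finset.mem_erase.1 (Q.le hp hx)).1
    have : x ∈ ({v} : Finset V) := by
      rw [h2]
      exact Finset.mem_insert_of_mem hx
    exact hxv (Finset.mem_singleton.1 this)
  · exact not_mem_of_subset_erase v (Q.le (Finset.mem_of_mem_erase h2))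
      (Finset.mem_singleton_self v)

lemma E1_inj (Q : Finpartition (univ.erase v)) (p1 p2 : Finset V)
    (h1 : p1 ∈ Q.parts) (h2 : p2 ∈ Q.parts) (h : E1 v Q p1 h1 = E1 v Q p2 h2) :
    p1 = p2 := by
  have hparts := congrArg Finpartition.parts h
  rw [E1_parts, E1_parts] at hparts
  have hm : insert v p1 ∈ insert (insert v p2) (Q.parts.erase p2) :=
    hparts ▸ Finset.mem_insert_self _ _
  rcases Finset.mem_insert.1 hm with h3 | h3
  · have hv1 : v ∉ p1 := not_mem_of_subset_erase v (Q.le h1)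
    have hv2 : v ∉ p2 := not_mem_of_subset_erase v (Q.le h2)
    rw [← Finset.erase_insert hv1, ← Finset.erase_insert hv2, h3]
  · exact absurd (Finset.mem_insert_self v p1)
      (fun hh => not_mem_of_subset_erase v (Q.le (Finset.mem_of_mem_erase h3)) hh)

lemma card_fiber {Q : Finpartition (univ.erase v)} (hQ : Q ∈ SPQ G v) :
    ((SP G).filter (fun P => D v P = Q)).card = 1 + (free G v Q).card := by
  have hnot : E0 v Q ∉ (free G v Q).attach.image
      (fun p => E1 v Q p.1 (mem_of_mem_filter p.1 p.2)) := by
    intro h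
    obtain ⟨p, -, hp⟩ := Finset.mem_image.1 h
    exact E0_ne_E1 v Q p.1 _ hp.symm
  have hinj : Set.InjOn (fun p : {x // x ∈ free G v Q} =>
      E1 v Q p.1 (mem_of_mem_filter p.1 p.2)) ↑(free G v Q).attach := by
    intro a _ b _ h
    exact Subtype.ext (E1_inj v Q a.1 b.1 _ _ h)
  rw [fiber_eq G v hQ, Finset.card_insert_of_notMem hnot,
    Finset.card_image_of_injOn hinj, Finset.card_attach]
  omega

lemma sum_fiber {Q : Finpartition (univ.erase v)} (hQ : Q ∈ SPQ G v) :
    ∑ P ∈ (SP G).filter (fun P => D v P = Q), P.parts.card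
      = (Q.parts.card + 1) + (free G v Q).card * Q.parts.card := by
  have hnot : E0 v Q ∉ (free G v Q).attach.image
      (fun p => E1 v Q p.1 (mem_of_mem_filter p.1 p.2)) := by
    intro h
    obtain ⟨p, -, hp⟩ := Finset.mem_image.1 h
    exact E0_ne_E1 v Q p.1 _ hp.symm
  have hinj : ∀ a ∈ (free G v Q).attach, ∀ b ∈ (free G v Q).attach,
      E1 v Q a.1 (mem_of_mem_filter a.1 a.2) = E1 v Q b.1 (mem_of_mem_filter b.1 b.2)
      → a = b := by
    intro a _ b _ h
    exact Subtype.ext (E1_inj v Q a.1 b.1 _ _ h)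
  rw [fiber_eq G v hQ, Finset.sum_insert hnot, Finset.sum_image hinj, E0_card,
    Finset.sum_congr rfl (fun p _ => E1_card v Q p.1 (mem_of_mem_filter p.1 p.2)),
    Finset.sum_const, Finset.card_attach, smul_eq_mul]

lemma colB_G : colB G = ∑ Q ∈ SPQ G v, (1 + (free G v Q).card) := by
  rw [colB_eq, Finset.card_eq_sum_card_fiberwise (f := D v) (t := SPQ G v)
    (fun P hP => (mem_SPQ G v).2 (D_stable G v (mem_SP.1 hP)))]
  exact Finset.sum_congr rfl fun Q hQ => card_fiber G v hQ

lemma colT_G : colT G = ∑ Q ∈ SPQ G v,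
    ((Q.parts.card + 1) + (free G v Q).card * Q.parts.card) := by
  rw [colT_eq, ← Finset.sum_fiberwise_of_maps_to (g := D v) (t := SPQ G v)
    (fun P hP => (mem_SPQ G v).2 (D_stable G v (mem_SP.1 hP))) (fun P => P.parts.card)]
  exact Finset.sum_congr rfl fun Q hQ => sum_fiber G v hQ

lemma SPQ_nonempty : (SPQ G v).Nonempty := by
  refine ⟨⊥, (mem_SPQ G v).2 ?_⟩
  intro p hp a ha b hb
  obtain ⟨w, -, rfl⟩ := Finpartition.mem_bot_iff.1 hp
  rw [Finset.mem_singleton] at ha hb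
  rw [ha, hb]
  exact G.loopless.irrefl w

end Delete

/-! ### The arithmetic core -/

lemma double_sum_sq {ι : Type*} [DecidableEq ι] (s : Finset ι) (c : ι → ℤ) :
    ∑ i ∈ s, ∑ j ∈ s, (c i - c j) ^ 2
      = 2 * ((s.card : ℤ) * ∑ i ∈ s, c i ^ 2) - 2 * (∑ i ∈ s, c i) ^ 2 := by
  have h1 : ∀ i ∈ s, ∑ j ∈ s, (c i - c j) ^ 2
      = (s.card : ℤ) * c i ^ 2 - 2 * c i * (∑ j ∈ s, c j) + ∑ j ∈ s, c j ^ 2 := by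
    intro i _
    rw [Finset.sum_congr rfl (fun j _ => show (c i - c j) ^ 2
        = c i ^ 2 - 2 * c i * c j + c j ^ 2 by ring)]
    rw [Finset.sum_add_distrib, Finset.sum_sub_distrib, Finset.sum_const, ← Finset.mul_sum]
    simp [nsmul_eq_mul]
  rw [Finset.sum_congr rfl h1, Finset.sum_add_distrib, Finset.sum_sub_distrib, Finset.sum_const,
    ← Finset.mul_sum, ← Finset.sum_mul, ← Finset.mul_sum]
  simp only [nsmul_eq_mul]
  ring

lemma key_ineq {ι : Type*} [DecidableEq ι] (s : Finset ι) (hs : s.Nonempty) (k b : ι → ℤ)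
    (hb0 : ∀ i ∈ s, 0 ≤ b i) (hb4 : ∀ i ∈ s, b i ≤ 4) (hbk : ∀ i ∈ s, b i ≤ k i)
    (hsplit : ∀ i ∈ s, ∀ j ∈ s, k i + 2 ≤ k j → ∃ l ∈ s, k l = k i + 1) :
    (∑ i ∈ s, k i) * (∑ i ∈ s, (1 + (k i - b i)))
      < (∑ i ∈ s, (k i + 1 + k i * (k i - b i))) * (s.card : ℤ) := by
  set S1 : ℤ := (s.card : ℤ) with hS1def
  set Sk := ∑ i ∈ s, k i with hSk
  set Sb := ∑ i ∈ s, b i with hSb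
  set Skk := ∑ i ∈ s, k i ^ 2 with hSkk
  set Skb := ∑ i ∈ s, k i * b i with hSkb
  set Sbb := ∑ i ∈ s, b i ^ 2 with hSbb
  set U := ∑ i ∈ s, b i * (4 - b i) with hUdef
  set DD := ∑ i ∈ s, ∑ j ∈ s, ((2 * k i - b i) - (2 * k j - b j)) ^ 2 with hDDdef
  have hS1pos : 0 < S1 := by
    rw [hS1def]
    exact_mod_cast Finset.card_pos.2 hs
  have hLHS : ∑ i ∈ s, (k i + 1 + k i * (k i - b i)) = Sk + S1 + (Skk - Skb) := by
    rw [Finset.sum_congr rfl (fun i _ => show k i + 1 + k i * (k i - b i)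
        = k i + 1 + (k i ^ 2 - k i * b i) by ring)]
    rw [Finset.sum_add_distrib, Finset.sum_add_distrib, Finset.sum_sub_distrib,
      Finset.sum_const, nsmul_eq_mul, mul_one]
  have hB : ∑ i ∈ s, (1 + (k i - b i)) = S1 + (Sk - Sb) := by
    rw [Finset.sum_add_distrib, Finset.sum_sub_distrib, Finset.sum_const, nsmul_eq_mul, mul_one]
  rw [hLHS, hB]
  have hU1 : U = 4 * Sb - Sbb := by
    rw [hUdef, Finset.sum_congr rfl (fun i _ => show b i * (4 - b i)
        = 4 * b i - b i ^ 2 by ring), Finset.sum_sub_distrib, ← Finset.mul_sum]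
  have hDD1 : DD = 2 * (S1 * (4 * Skk - 4 * Skb + Sbb)) - 2 * (2 * Sk - Sb) ^ 2 := by
    rw [hDDdef, double_sum_sq s (fun i => 2 * k i - b i)]
    have h2 : ∑ i ∈ s, (2 * k i - b i) ^ 2 = 4 * Skk - 4 * Skb + Sbb := by
      rw [Finset.sum_congr rfl (fun i _ => show (2 * k i - b i) ^ 2
          = 4 * k i ^ 2 - 4 * (k i * b i) + b i ^ 2 by ring)]
      rw [Finset.sum_add_distrib, Finset.sum_sub_distrib, ← Finset.mul_sum, ← Finset.mul_sum]
    have h3 : ∑ i ∈ s, (2 * k i - b i) = 2 * Sk - Sb := by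
      rw [Finset.sum_sub_distrib, ← Finset.mul_sum]
    rw [h2, h3]
  have hU0 : 0 ≤ U := Finset.sum_nonneg fun i hi =>
    mul_nonneg (hb0 i hi) (by linarith [hb4 i hi])
  have hDD0 : 0 ≤ DD := Finset.sum_nonneg fun i _ =>
    Finset.sum_nonneg fun j _ => sq_nonneg _
  have hid : 8 * ((Sk + S1 + (Skk - Skb)) * S1 - Sk * (S1 + (Sk - Sb)))
      = 2 * (Sb - 2 * S1) ^ 2 + 2 * S1 * U + DD := by
    rw [hU1, hDD1]; ring
  by_contra hle
  push_neg at hle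
  have hsum0 : 2 * (Sb - 2 * S1) ^ 2 + 2 * S1 * U + DD ≤ 0 := by
    rw [← hid]; linarith
  have hX1 : (Sb - 2 * S1) ^ 2 = 0 := by
    nlinarith [sq_nonneg (Sb - 2 * S1), mul_nonneg hS1pos.le hU0]
  have hSb2 : Sb = 2 * S1 := by
    have := pow_eq_zero_iff (n := 2) (by norm_num) |>.1 hX1
    linarith [sub_eq_zero.1 this]
  have hU0' : U = 0 := by
    have hSU : S1 * U = 0 := le_antisymm (by nlinarith) (mul_nonneg hS1pos.le hU0)
    exact (mul_eq_zero.1 hSU).resolve_left (ne_of_gt hS1pos)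
  have hDD0' : DD = 0 := by linarith [sq_nonneg (Sb - 2 * S1), mul_nonneg hS1pos.le hU0]
  have hbvals : ∀ i ∈ s, b i = 0 ∨ b i = 4 := by
    intro i hi
    have h := (Finset.sum_eq_zero_iff_of_nonneg (fun j hj =>
      mul_nonneg (hb0 j hj) (by linarith [hb4 j hj]))).1 hU0' i hi
    rcases mul_eq_zero.1 h with h' | h'
    · exact Or.inl h'
    · exact Or.inr (by linarith)
  have hcconst : ∀ i ∈ s, ∀ j ∈ s, 2 * k i - b i = 2 * k j - b j := by
    intro i hi j hj
    have houter := (Finset.sum_eq_zero_iff_of_nonneg (fun i _ =>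
      Finset.sum_nonneg fun j _ => sq_nonneg _)).1 hDD0' i hi
    have hinner := (Finset.sum_eq_zero_iff_of_nonneg (fun j _ => sq_nonneg _)).1 houter j hj
    have := pow_eq_zero_iff (n := 2) (by norm_num) |>.1 hinner
    linarith [sub_eq_zero.1 this]
  have hi4 : ∃ i ∈ s, b i = 4 := by
    by_contra h
    push_neg at h
    have hz : ∀ i ∈ s, b i = 0 := fun i hi => (hbvals i hi).resolve_right (h i hi)
    have : Sb = 0 := Finset.sum_eq_zero hz
    linarith
  have hi0 : ∃ i ∈ s, b i = 0 := by
    by_contra h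
    push_neg at h
    have hz : ∀ i ∈ s, b i = 4 := fun i hi => (hbvals i hi).resolve_left (h i hi)
    have : Sb = 4 * S1 := by
      rw [hSb, Finset.sum_congr rfl hz, Finset.sum_const, nsmul_eq_mul, mul_comm]
    linarith
  obtain ⟨i4, hi4s, hb4'⟩ := hi4
  obtain ⟨i0, hi0s, hb0'⟩ := hi0
  have hk42 : k i0 + 2 ≤ k i4 := by
    have := hcconst i4 hi4s i0 hi0s
    rw [hb4', hb0'] at this
    linarith
  obtain ⟨l, hls, hkl⟩ := hsplit i0 hi0s i4 hi4s hk42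
  have hcl := hcconst l hls i0 hi0s
  rw [hkl, hb0'] at hcl
  have hbl : b l = 2 := by linarith
  rcases hbvals l hls with h' | h' <;> simp [hbl] at h' <;> linarith

end ColAux

open ColAux in
theorem stmt5 {V : Type*} [Fintype V] [DecidableEq V] (G : SimpleGraph V) [DecidableRel G.Adj]
    (v : V) (hv : G.degree v ≤ 4) :
    colA G > colA (deleteVertex G v) := by
  classical
  have hBQpos : 0 < (SPQ G v).card := Finset.card_pos.2 (SPQ_nonempty G v)
  have hBGpos : 0 < colB G := by
    rw [colB_G G v]
    exact Finset.sum_pos (fun Q _ => by omega) (SPQ_nonempty G v)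
  have hBDpos : 0 < colB (deleteVertex G v) := by
    rw [colB_delete G v]
    exact hBQpos
  have key : (colT (deleteVertex G v) : ℤ) * (colB G : ℤ)
      < (colT G : ℤ) * (colB (deleteVertex G v) : ℤ) := by
    rw [colT_delete G v, colB_delete G v, colT_G G v, colB_G G v]
    push_cast
    have e1 : ∑ Q ∈ SPQ G v, (1 + ((free G v Q).card : ℤ))
        = ∑ Q ∈ SPQ G v, (1 + ((Q.parts.card : ℤ)
          - ((Q.parts.card : ℤ) - ((free G v Q).card : ℤ)))) :=
      Finset.sum_congr rfl (fun Q _ => by ring)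
    have e2 : ∑ Q ∈ SPQ G v, ((Q.parts.card : ℤ) + 1
          + ((free G v Q).card : ℤ) * (Q.parts.card : ℤ))
        = ∑ Q ∈ SPQ G v, ((Q.parts.card : ℤ) + 1 + (Q.parts.card : ℤ)
          * ((Q.parts.card : ℤ) - ((Q.parts.card : ℤ) - ((free G v Q).card : ℤ)))) :=
      Finset.sum_congr rfl (fun Q _ => by ring)
    rw [e1, e2]
    refine key_ineq (SPQ G v) (SPQ_nonempty G v) (fun Q => (Q.parts.card : ℤ))
      (fun Q => (Q.parts.card : ℤ) - ((free G v Q).card : ℤ)) ?_ ?_ ?_ ?_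
    · intro Q _
      have := a_le_k G v Q
      omega
    · intro Q _
      have h1 := k_sub_a_le_deg G v Q
      have h2 := a_le_k G v Q
      omega
    · intro Q _
      have : 0 ≤ (free G v Q).card := Nat.zero_le _
      omega
    · intro Qi hQi Qj hQj hk2
      have hk2' : Qi.parts.card + 2 ≤ Qj.parts.card := by exact_mod_cast hk2
      have hlt : Qi.parts.card < (univ.erase v).card :=
        lt_of_lt_of_le (by omega) Qj.card_parts_le_card
      obtain ⟨R, hR, hcard⟩ := exists_card_succ Qi ((mem_SPQ G v).1 hQi) hlt
      refine ⟨R, (mem_SPQ G v).2 hR, ?_⟩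
      exact_mod_cast congrArg (Nat.cast : ℕ → ℤ) hcard
  rw [colA, colA, gt_iff_lt, div_lt_div_iff₀ (by exact_mod_cast hBDpos) (by exact_mod_cast hBGpos)]
  exact_mod_cast key
end

section
/- For the complement of the path on n ≥ 1 vertices, A(complement of P_n) = ((n+1)·F_{n+2} + (2n−1)·F_{n+1}) / (5·F_{n+1}), where F_m is the mth Fibonacci number (F_1 = F_2 = 1). -/
open Finset

/-- Matchings of a path with `m` edges, as sets of edge indices with no two consecutive. -/
def mat (m : ℕ) : Finset (Finset ℕ) :=
  (Finset.range m).powerset.filter (fun M => ∀ i ∈ M, i + 1 ∉ M)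

lemma mem_mat {m : ℕ} {M : Finset ℕ} :
    M ∈ mat m ↔ M ⊆ Finset.range m ∧ ∀ i ∈ M, i + 1 ∉ M := by
  simp [mat]

lemma mat_zero : mat 0 = {∅} := by decide

lemma mat_one : mat 1 = {∅, {0}} := by decide

lemma mat_succ_succ (m : ℕ) :
    mat (m + 2) = mat (m + 1) ∪ (mat m).image (insert (m + 1)) := by
  ext M
  simp only [mem_union, mem_image]
  constructor
  · intro hM
    rw [mem_mat] at hM
    obtain ⟨hsub, hprop⟩ := hM
    by_cases h : m + 1 ∈ M
    · right
      refine ⟨M.erase (m + 1), ?_, ?_⟩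
      · rw [mem_mat]
        constructor
        · intro x hx
          have hx1 := mem_of_mem_erase hx
          have hx2 : x ≠ m + 1 := ne_of_mem_erase hx
          have hx3 : x < m + 2 := mem_range.mp (hsub hx1)
          have hxm : x ≠ m := by
            rintro rfl
            exact hprop x hx1 h
          exact mem_range.mpr (by omega)
        · intro i hi
          exact fun hc => hprop i (mem_of_mem_erase hi) (mem_of_mem_erase hc)
      · exact insert_erase h
    · left
      rw [mem_mat]
      refine ⟨fun x hx => ?_, hprop⟩
      have : x < m + 2 := mem_range.mp (hsub hx)
      have : x ≠ m + 1 := fun hc => h (hc ▸ hx)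
      exact mem_range.mpr (by omega)
  · rintro (hM | ⟨M', hM', rfl⟩)
    · rw [mem_mat] at hM ⊢
      exact ⟨hM.1.trans (range_subset_range.mpr (by omega)), hM.2⟩
    · rw [mem_mat] at hM' ⊢
      obtain ⟨hsub, hprop⟩ := hM'
      constructor
      · intro x hx
        rcases mem_insert.mp hx with rfl | hx
        · exact mem_range.mpr (by omega)
        · exact mem_range.mpr (by have := mem_range.mp (hsub hx); omega)
      · intro i hi
        rcases mem_insert.mp hi with rfl | hi
        · intro hc
          rcases mem_insert.mp hc with h | h
          · omega
          · have := mem_range.mp (hsub h); omega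
        · intro hc
          rcases mem_insert.mp hc with h | h
          · have := mem_range.mp (hsub hi); omega
          · exact hprop i hi h

lemma not_mem_self_mat {m : ℕ} {M : Finset ℕ} (hM : M ∈ mat m) : m ∉ M := by
  rw [mem_mat] at hM
  intro h
  exact absurd (mem_range.mp (hM.1 h)) (by omega)

lemma mat_disj (m : ℕ) : Disjoint (mat (m + 1)) ((mat m).image (insert (m + 1))) := by
  rw [disjoint_left]
  intro M hM hM'
  obtain ⟨M', hM', rfl⟩ := mem_image.mp hM'
  exact not_mem_self_mat hM (mem_insert_self _ _)

lemma mat_inj (m : ℕ) : Set.InjOn (insert (m + 1)) (↑(mat m) : Set (Finset ℕ)) := by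
  intro a ha b hb h
  rw [Finset.mem_coe, mem_mat] at ha hb
  have ha' : m + 1 ∉ a := by
    intro hc; have := mem_range.mp (ha.1 hc); omega
  have hb' : m + 1 ∉ b := by
    intro hc; have := mem_range.mp (hb.1 hc); omega
  have := congrArg (fun s => Finset.erase s (m + 1)) h
  simpa [Finset.erase_insert ha', Finset.erase_insert hb'] using this

lemma card_mat (m : ℕ) : (mat m).card = Nat.fib (m + 2) := by
  induction m using Nat.strong_induction_on with
  | _ m ih =>
    match m with
    | 0 => rw [mat_zero]; rfl
    | 1 => rw [mat_one]; rfl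
    | (k + 2) =>
      rw [mat_succ_succ, card_union_of_disjoint (mat_disj k),
        Finset.card_image_of_injOn (mat_inj k), ih (k+1) (by omega), ih k (by omega)]
      have e4 : Nat.fib (k + 4) = Nat.fib (k + 3) + Nat.fib (k + 2) := by
        rw [show k + 4 = k + 2 + 2 by omega, Nat.fib_add_two]; ring
      have e3 : Nat.fib (k + 3) = Nat.fib (k + 2) + Nat.fib (k + 1) := by
        rw [show k + 3 = k + 1 + 2 by omega, Nat.fib_add_two]; ring
      ring_nf at *
      omega

lemma card_le_of_mat {m : ℕ} {M : Finset ℕ} (hM : M ∈ mat m) : M.card ≤ m := by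
  rw [mem_mat] at hM
  simpa using Finset.card_le_card hM.1

/-- total part count over all matchings -/
def matT (m : ℕ) : ℕ := ∑ M ∈ mat m, (m + 1 - M.card)

lemma matT_zero : matT 0 = 1 := by rw [matT, mat_zero]; rfl

lemma matT_one : matT 1 = 3 := by rw [matT, mat_one]; rfl

lemma matT_succ_succ (m : ℕ) :
    matT (m + 2) = matT (m + 1) + matT m + Nat.fib (m + 4) := by
  rw [matT, mat_succ_succ, Finset.sum_union (mat_disj m),
    Finset.sum_image (fun a ha b hb h => mat_inj m ha hb h)]
  have h1 : ∑ M ∈ mat (m + 1), (m + 2 + 1 - M.card)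
      = ∑ M ∈ mat (m + 1), ((m + 1 + 1 - M.card) + 1) := by
    apply Finset.sum_congr rfl
    intro M hM
    have := card_le_of_mat hM
    omega
  have h2 : ∑ M ∈ mat m, (m + 2 + 1 - (insert (m + 1) M).card)
      = ∑ M ∈ mat m, ((m + 1 - M.card) + 1) := by
    apply Finset.sum_congr rfl
    intro M hM
    have hcard : (insert (m + 1) M).card = M.card + 1 := by
      apply Finset.card_insert_of_notMem
      rw [mem_mat] at hM
      intro hc; have := mem_range.mp (hM.1 hc); omega
    have := card_le_of_mat hM
    rw [hcard]
    omega
  rw [h1, h2, Finset.sum_add_distrib, Finset.sum_add_distrib]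
  simp only [Finset.sum_const, smul_eq_mul, mul_one, card_mat]
  rw [matT, matT]
  have e4 : Nat.fib (m + 4) = Nat.fib (m + 3) + Nat.fib (m + 2) := by
        rw [show m + 4 = m + 2 + 2 by omega, Nat.fib_add_two]; ring
  ring_nf at *
  omega

lemma matT_formula (m : ℕ) :
    5 * matT m = (m + 2) * Nat.fib (m + 3) + (2 * m + 1) * Nat.fib (m + 2) := by
  induction m using Nat.strong_induction_on with
  | _ m ih =>
    match m with
    | 0 => rw [matT_zero]; rfl
    | 1 => rw [matT_one]; rfl
    | (k + 2) =>
      have i1 := ih (k + 1) (by omega)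
      have i2 := ih k (by omega)
      rw [matT_succ_succ, Nat.mul_add, Nat.mul_add, i1, i2]
      have e5 : Nat.fib (k + 5) = Nat.fib (k + 4) + Nat.fib (k + 3) := by
        rw [show k + 5 = k + 3 + 2 by omega, Nat.fib_add_two]; ring
      have e4 : Nat.fib (k + 4) = Nat.fib (k + 3) + Nat.fib (k + 2) := by
        rw [show k + 4 = k + 2 + 2 by omega, Nat.fib_add_two]; ring
      have e3 : Nat.fib (k + 3) = Nat.fib (k + 2) + Nat.fib (k + 1) := by
        rw [show k + 3 = k + 1 + 2 by omega, Nat.fib_add_two]; ring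
      have m5 : k * Nat.fib (k + 5) = k * Nat.fib (k + 4) + k * Nat.fib (k + 3) := by
        rw [e5]; ring
      have m4 : k * Nat.fib (k + 4) = k * Nat.fib (k + 3) + k * Nat.fib (k + 2) := by
        rw [e4]; ring
      have m3 : k * Nat.fib (k + 3) = k * Nat.fib (k + 2) + k * Nat.fib (k + 1) := by
        rw [e3]; ring
      ring_nf at *
      omega
section Graph

variable {n : ℕ}

/-- relation on `Fin n` induced by a matching `M` -/
def mrel (M : Finset ℕ) (u v : Fin n) : Prop :=
  (u : ℕ) = v ∨ ((u : ℕ) ∈ M ∧ (v : ℕ) = (u : ℕ) + 1) ∨ ((v : ℕ) ∈ M ∧ (u : ℕ) = (v : ℕ) + 1)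

instance (M : Finset ℕ) : DecidableRel (mrel (n := n) M) := fun u v => by
  unfold mrel; infer_instance

lemma mrel_equiv {M : Finset ℕ} (hM : ∀ i ∈ M, i + 1 ∉ M) :
    Equivalence (mrel (n := n) M) := by
  constructor
  · intro x; left; rfl
  · intro x y h
    rcases h with h | ⟨h1, h2⟩ | ⟨h1, h2⟩
    · left; omega
    · right; right; exact ⟨h1, h2⟩
    · right; left; exact ⟨h1, h2⟩
  · intro x y z hxy hyz
    rcases hxy with h | ⟨h1, h2⟩ | ⟨h1, h2⟩ <;>
      rcases hyz with g | ⟨g1, g2⟩ | ⟨g1, g2⟩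
    · left; omega
    · right; left; exact ⟨h ▸ g1, by omega⟩
    · right; right; exact ⟨g1, by omega⟩
    · right; left; exact ⟨h1, by omega⟩
    · exact absurd (h2 ▸ g1) (hM _ h1)
    · left; omega
    · right; right; exact ⟨g ▸ h1, by omega⟩
    · left; omega
    · exact absurd (g2 ▸ h1) (hM _ g1)

/-- The stable partition of the complement of the path graph associated to a matching. -/
def Phi (n : ℕ) (M : Finset ℕ) : Finpartition (univ : Finset (Fin n)) :=
  if hM : ∀ i ∈ M, i + 1 ∉ M then
    @Finpartition.ofSetoid (Fin n) _ _ ⟨mrel M, mrel_equiv hM⟩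
      (inferInstanceAs (DecidableRel (mrel M)))
  else
    @Finpartition.ofSetoid (Fin n) _ _ ⟨Eq, eq_equivalence⟩
      (fun a b => inferInstanceAs (Decidable (a = b)))

lemma Phi_mem_part {M : Finset ℕ} (hM : ∀ i ∈ M, i + 1 ∉ M) (a b : Fin n) :
    b ∈ (Phi n M).part a ↔ mrel M a b := by
  rw [Phi]
  rw [dif_pos hM]
  exact @Finpartition.mem_part_ofSetoid_iff_rel (Fin n) _ a _ ⟨mrel M, mrel_equiv hM⟩
    (inferInstanceAs (DecidableRel (mrel M))) b

lemma finpartition_eq_of_part_eq {α : Type*} [DecidableEq α] {s : Finset α}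
    {P Q : Finpartition s} (h : ∀ a ∈ s, P.part a = Q.part a) : P = Q := by
  ext p
  constructor
  · intro hp
    obtain ⟨x, hx, rfl⟩ := P.part_surjOn hp
    rw [h x hx]
    exact Q.part_mem.mpr hx
  · intro hp
    obtain ⟨x, hx, rfl⟩ := Q.part_surjOn hp
    rw [← h x hx]
    exact P.part_mem.mpr hx

lemma not_compl_path_adj {u v : Fin n} :
    ¬ ((SimpleGraph.pathGraph n)ᶜ.Adj u v) ↔
      ((u : ℕ) = v ∨ (u : ℕ) + 1 = v ∨ (v : ℕ) + 1 = u) := by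
  rw [SimpleGraph.compl_adj, SimpleGraph.pathGraph_adj]
  constructor
  · intro h
    by_cases huv : u = v
    · left; rw [huv]
    · push_neg at h
      have := h huv
      omega
  · intro h
    intro hc
    obtain ⟨h1, h2⟩ := hc
    have huv : (u : ℕ) ≠ (v : ℕ) := fun hv => h1 (Fin.ext hv)
    omega

lemma Phi_stable {M : Finset ℕ} (hM : ∀ i ∈ M, i + 1 ∉ M) :
    IsStablePartition ((SimpleGraph.pathGraph n)ᶜ) (Phi n M) := by
  intro p hp u hu v hv
  obtain ⟨a, _, rfl⟩ := (Phi n M).part_surjOn hp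
  have h1 : mrel M a u := (Phi_mem_part hM a u).mp hu
  have h2 : mrel M a v := (Phi_mem_part hM a v).mp hv
  rw [not_compl_path_adj]
  rcases h1 with h | ⟨h1, h2'⟩ | ⟨h1, h2'⟩ <;>
    rcases h2 with g | ⟨g1, g2⟩ | ⟨g1, g2⟩ <;>
      first
        | omega
        | exact absurd (show (u : ℕ) + 1 ∈ M by rw [← h2']; exact g1) (hM _ h1)
        | exact absurd (show (v : ℕ) + 1 ∈ M by rw [← g2]; exact h1) (hM _ g1)

end Graph
section Graph2

variable {n : ℕ}

lemma mrel_pair {M : Finset ℕ} (hM : ∀ i ∈ M, i + 1 ∉ M) {a b c : Fin n}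
    (hb : mrel M a b) (hc : mrel M a c) : b = c ∨ b = a ∨ c = a := by
  simp only [Fin.ext_iff]
  rcases hb with h | ⟨h1, h2⟩ | ⟨h1, h2⟩ <;>
    rcases hc with g | ⟨g1, g2⟩ | ⟨g1, g2⟩ <;>
      first
        | omega
        | exact absurd (show (b : ℕ) + 1 ∈ M by rw [← h2]; exact g1) (hM _ h1)
        | exact absurd (show (c : ℕ) + 1 ∈ M by rw [← g2]; exact h1) (hM _ g1)

lemma Phi_part_card_le {M : Finset ℕ} (hM : ∀ i ∈ M, i + 1 ∉ M) {p : Finset (Fin n)}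
    (hp : p ∈ (Phi n M).parts) : p.card ≤ 2 := by
  by_contra hlt
  push_neg at hlt
  obtain ⟨x, hx, y, hy, z, hz, hxy, hxz, hyz⟩ := Finset.two_lt_card.mp hlt
  obtain ⟨a, _, rfl⟩ := (Phi n M).part_surjOn hp
  have h1 := (Phi_mem_part hM a x).mp hx
  have h2 := (Phi_mem_part hM a y).mp hy
  have h3 := (Phi_mem_part hM a z).mp hz
  rcases mrel_pair hM h1 h2 with e | e | e
  · exact hxy e
  · rcases mrel_pair hM h2 h3 with f | f | f
    · exact hyz f
    · exact hxy (e.trans f.symm)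
    · exact hxz (e.trans f.symm)
  · rcases mrel_pair hM h1 h3 with f | f | f
    · exact hxz f
    · exact hxy (f.trans e.symm)
    · exact hyz (e.trans f.symm)

lemma Phi_two_parts_card {M : Finset ℕ} (hM : ∀ i ∈ M, i + 1 ∉ M)
    (hsub : M ⊆ Finset.range (n - 1)) :
    ((Phi n M).parts.filter (fun p => p.card = 2)).card = M.card := by
  symm
  have hlt : ∀ j ∈ M, j < n - 1 := fun j hj => mem_range.mp (hsub hj)
  apply Finset.card_bij
    (i := fun (j : ℕ) (hj : j ∈ M) =>
      (Phi n M).part ⟨j, by have := hlt j hj; omega⟩)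
  · -- maps into the filter
    intro j hj
    have hjn : j < n - 1 := hlt j hj
    rw [mem_filter]
    refine ⟨(Phi n M).part_mem.mpr (mem_univ _), ?_⟩
    apply le_antisymm (Phi_part_card_le hM ((Phi n M).part_mem.mpr (mem_univ _)))
    apply Finset.one_lt_card.mpr
    refine ⟨⟨j, by omega⟩, (Phi n M).mem_part (mem_univ _),
      ⟨j + 1, by omega⟩, ?_, ?_⟩
    · rw [Phi_mem_part hM]
      right; left
      exact ⟨hj, rfl⟩
    · intro hc
      have := congrArg Fin.val hc
      simp at this
  · -- injective
    intro j hj k hk heq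
    have hkmem : (⟨k, by have := hlt k hk; omega⟩ : Fin n) ∈
        (Phi n M).part ⟨j, by have := hlt j hj; omega⟩ := by
      rw [heq]; exact (Phi n M).mem_part (mem_univ _)
    rw [Phi_mem_part hM] at hkmem
    rcases hkmem with h | ⟨h1, h2⟩ | ⟨h1, h2⟩
    · simpa using h
    · simp only at h2
      exact absurd (show j + 1 ∈ M by rw [← h2]; exact hk) (hM _ hj)
    · simp only at h2
      exact absurd (show k + 1 ∈ M by rw [← h2]; exact hj) (hM _ h1)
  · -- surjective
    intro p hp
    rw [mem_filter] at hp
    obtain ⟨hp, hcard⟩ := hp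
    obtain ⟨a, _, rfl⟩ := (Phi n M).part_surjOn hp
    obtain ⟨b, hb, hba⟩ := Finset.exists_mem_ne (by rw [hcard]; norm_num) a
    have hrel := (Phi_mem_part hM a b).mp hb
    rcases hrel with h | ⟨h1, h2⟩ | ⟨h1, h2⟩
    · exact absurd (Fin.ext h).symm hba
    · exact ⟨(a : ℕ), h1, rfl⟩
    · refine ⟨(b : ℕ), h1, ?_⟩
      have hab : a ∈ (Phi n M).part b := by
        rw [Phi_mem_part hM]
        right; left
        exact ⟨h1, h2⟩
      exact (Phi n M).eq_of_mem_parts ((Phi n M).part_mem.mpr (mem_univ b))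
        ((Phi n M).part_mem.mpr (mem_univ a)) hab ((Phi n M).mem_part (mem_univ a))

lemma Phi_parts_card {M : Finset ℕ} (hM : ∀ i ∈ M, i + 1 ∉ M)
    (hsub : M ⊆ Finset.range (n - 1)) :
    (Phi n M).parts.card = n - M.card := by
  have hsum : ∑ p ∈ (Phi n M).parts, p.card = n := by
    rw [Finpartition.sum_card_parts, card_univ, Fintype.card_fin]
  have h2 : ∑ p ∈ (Phi n M).parts, (p.card - 1) = M.card := by
    rw [← Phi_two_parts_card hM hsub,
      ← Finset.sum_filter_add_sum_filter_not (Phi n M).parts (fun p => p.card = 2)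
        (fun p => p.card - 1)]
    have ha : ∑ p ∈ (Phi n M).parts.filter (fun p => p.card = 2), (p.card - 1)
        = ((Phi n M).parts.filter (fun p => p.card = 2)).card := by
      rw [Finset.sum_congr rfl (fun p hp => by rw [(mem_filter.mp hp).2])]
      simp
    have hb : ∑ p ∈ (Phi n M).parts.filter (fun p => ¬ p.card = 2), (p.card - 1) = 0 := by
      apply Finset.sum_eq_zero
      intro p hp
      rw [mem_filter] at hp
      have hle := Phi_part_card_le hM hp.1
      have hpos := ((Phi n M).nonempty_of_mem_parts hp.1).card_pos
      have := hp.2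
      omega
    rw [ha, hb]
    omega
  have h1 : ∑ p ∈ (Phi n M).parts, p.card
      = (Phi n M).parts.card + ∑ p ∈ (Phi n M).parts, (p.card - 1) := by
    rw [Finset.sum_congr rfl (fun p hp => show p.card = 1 + (p.card - 1) by
      have := ((Phi n M).nonempty_of_mem_parts hp).card_pos; omega),
      Finset.sum_add_distrib]
    simp
  omega

lemma Phi_inj_aux {M M' : Finset ℕ} (hsub : M ⊆ Finset.range (n - 1))
    (hM : ∀ i ∈ M, i + 1 ∉ M) (hM' : ∀ i ∈ M', i + 1 ∉ M')
    (h : Phi n M = Phi n M') : ∀ i ∈ M, i ∈ M' := by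
  intro i hi
  have hin : i < n - 1 := mem_range.mp (hsub hi)
  have hmem : (⟨i + 1, by omega⟩ : Fin n) ∈ (Phi n M).part ⟨i, by omega⟩ := by
    rw [Phi_mem_part hM]
    right; left
    exact ⟨hi, rfl⟩
  rw [h, Phi_mem_part hM'] at hmem
  rcases hmem with h' | ⟨h1, h2⟩ | ⟨h1, h2⟩
  · simp at h'
  · exact h1
  · simp only at h2
    omega

end Graph2
section Graph3

variable {n : ℕ}

lemma Phi_surj (hn : 1 ≤ n) (P : Finpartition (univ : Finset (Fin n)))
    (hP : IsStablePartition ((SimpleGraph.pathGraph n)ᶜ) P) :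
    ∃ M ∈ mat (n - 1), Phi n M = P := by
  classical
  set M := (Finset.range (n - 1)).filter
    (fun i => ∀ u v : Fin n, (u : ℕ) = i → (v : ℕ) = i + 1 → v ∈ P.part u) with hMdef
  have hMmem : ∀ i, i ∈ M ↔ i < n - 1 ∧
      ∀ u v : Fin n, (u : ℕ) = i → (v : ℕ) = i + 1 → v ∈ P.part u := by
    intro i
    rw [hMdef, mem_filter, mem_range]
  have hstab : ∀ a b : Fin n, b ∈ P.part a →
      ((a : ℕ) = b ∨ (a : ℕ) + 1 = b ∨ (b : ℕ) + 1 = a) := by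
    intro a b hb
    exact not_compl_path_adj.mp
      (hP _ (P.part_mem.mpr (mem_univ a)) a (P.mem_part (mem_univ a)) b hb)
  have hprop : ∀ i ∈ M, i + 1 ∉ M := by
    intro i hi hc
    rw [hMmem] at hi hc
    obtain ⟨hilt, hicond⟩ := hi
    obtain ⟨hclt, hccond⟩ := hc
    have hi2 : i + 2 < n := by omega
    set u : Fin n := ⟨i, by omega⟩
    set v : Fin n := ⟨i + 1, by omega⟩
    set w : Fin n := ⟨i + 2, by omega⟩
    have hv : v ∈ P.part u := hicond u v rfl rfl
    have hw : w ∈ P.part v := hccond v w rfl rfl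
    have hvu : P.part v = P.part u :=
      P.eq_of_mem_parts (P.part_mem.mpr (mem_univ v)) (P.part_mem.mpr (mem_univ u))
        (P.mem_part (mem_univ v)) hv
    rw [hvu] at hw
    have := hstab u w hw
    simp only [u, w] at this
    omega
  have hsub : M ⊆ Finset.range (n - 1) := by
    rw [hMdef]; exact filter_subset _ _
  refine ⟨M, mem_mat.mpr ⟨hsub, hprop⟩, ?_⟩
  apply finpartition_eq_of_part_eq
  intro a _
  ext b
  rw [Phi_mem_part hprop]
  constructor
  · intro h
    rcases h with h | ⟨h1, h2⟩ | ⟨h1, h2⟩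
    · have : a = b := Fin.ext h
      rw [← this]
      exact P.mem_part (mem_univ a)
    · exact ((hMmem _).mp h1).2 a b rfl h2
    · have ha : a ∈ P.part b := ((hMmem _).mp h1).2 b a rfl h2
      have : P.part a = P.part b :=
        P.eq_of_mem_parts (P.part_mem.mpr (mem_univ a)) (P.part_mem.mpr (mem_univ b))
          (P.mem_part (mem_univ a)) ha
      rw [this]
      exact P.mem_part (mem_univ b)
  · intro hb
    rcases hstab a b hb with h | h | h
    · left; exact h
    · right; left
      have hblt : (b : ℕ) < n := b.isLt
      refine ⟨(hMmem _).mpr ⟨by omega, ?_⟩, by omega⟩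
      intro u v hu hv
      have hua : u = a := Fin.ext hu
      have hvb : v = b := Fin.ext (by omega)
      rw [hua, hvb]
      exact hb
    · right; right
      have halt : (a : ℕ) < n := a.isLt
      refine ⟨(hMmem _).mpr ⟨by omega, ?_⟩, by omega⟩
      intro u v hu hv
      have hub : u = b := Fin.ext hu
      have hva : v = a := Fin.ext (by omega)
      rw [hub, hva]
      have : P.part b = P.part a :=
        P.eq_of_mem_parts (P.part_mem.mpr (mem_univ b)) (P.part_mem.mpr (mem_univ a))
          (P.mem_part (mem_univ b)) hb
      rw [this]
      exact P.mem_part (mem_univ a)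

end Graph3
section Final

lemma colS_eq_s15 (n k : ℕ) (hn : 1 ≤ n) :
    colS ((SimpleGraph.pathGraph n)ᶜ) k
      = ((mat (n - 1)).filter (fun M => n - M.card = k)).card := by
  rw [colS]
  have himg : {P : Finpartition (univ : Finset (Fin n)) |
      IsStablePartition ((SimpleGraph.pathGraph n)ᶜ) P ∧ P.parts.card = k}
      = (Phi n) '' ↑((mat (n - 1)).filter (fun M => n - M.card = k)) := by
    ext P
    simp only [Set.mem_image, Finset.mem_coe, mem_filter, Set.mem_setOf_eq]
    constructor
    · rintro ⟨hst, hcard⟩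
      obtain ⟨M, hMmat, rfl⟩ := Phi_surj hn P hst
      obtain ⟨hsub, hprop⟩ := mem_mat.mp hMmat
      rw [Phi_parts_card hprop hsub] at hcard
      exact ⟨M, ⟨hMmat, hcard⟩, rfl⟩
    · rintro ⟨M, ⟨hMmat, hk⟩, rfl⟩
      obtain ⟨hsub, hprop⟩ := mem_mat.mp hMmat
      exact ⟨Phi_stable hprop, by rw [Phi_parts_card hprop hsub]; exact hk⟩
  rw [himg, Set.ncard_image_of_injOn, Set.ncard_coe_finset]
  intro M1 h1 M2 h2 heq
  rw [Finset.mem_coe, mem_filter] at h1 h2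
  obtain ⟨hs1, hp1⟩ := mem_mat.mp h1.1
  obtain ⟨hs2, hp2⟩ := mem_mat.mp h2.1
  exact Finset.Subset.antisymm
    (fun i hi => Phi_inj_aux hs1 hp1 hp2 heq i hi)
    (fun i hi => Phi_inj_aux hs2 hp2 hp1 heq.symm i hi)

theorem stmt15 (n : ℕ) (hn : 1 ≤ n) :
    colA ((SimpleGraph.pathGraph n)ᶜ) =
      (((n + 1) * Nat.fib (n + 2) + (2 * n - 1) * Nat.fib (n + 1) : ℕ) : ℚ) /
        ((5 * Nat.fib (n + 1) : ℕ) : ℚ) := by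
  have hcard : Fintype.card (Fin n) = n := Fintype.card_fin n
  have hmaps : ∀ M ∈ mat (n - 1), n - M.card ∈ Finset.range (n + 1) := by
    intro M _
    rw [mem_range]
    omega
  have hB : colB ((SimpleGraph.pathGraph n)ᶜ) = Nat.fib (n + 1) := by
    rw [colB]
    simp only [hcard]
    rw [Finset.sum_congr rfl (fun k _ => colS_eq_s15 n k hn)]
    rw [← Finset.card_eq_sum_card_fiberwise hmaps, card_mat,
      show n - 1 + 2 = n + 1 by omega]
  have hT : colT ((SimpleGraph.pathGraph n)ᶜ) = matT (n - 1) := by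
    rw [colT]
    simp only [hcard]
    rw [Finset.sum_congr rfl (fun k _ => by rw [colS_eq_s15 n k hn])]
    have : ∀ k ∈ Finset.range (n + 1),
        k * ((mat (n - 1)).filter (fun M => n - M.card = k)).card
        = ∑ M ∈ (mat (n - 1)).filter (fun M => n - M.card = k), (n - M.card) := by
      intro k _
      rw [Finset.sum_congr rfl (fun M hM => (mem_filter.mp hM).2),
        Finset.sum_const, smul_eq_mul, mul_comm]
    rw [Finset.sum_congr rfl this, Finset.sum_fiberwise_of_maps_to hmaps, matT]
    apply Finset.sum_congr rfl
    intro M _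
    congr 1
    omega
  have h5T : 5 * colT ((SimpleGraph.pathGraph n)ᶜ)
      = (n + 1) * Nat.fib (n + 2) + (2 * n - 1) * Nat.fib (n + 1) := by
    rw [hT, matT_formula,
      show n - 1 + 3 = n + 2 by omega, show n - 1 + 2 = n + 1 by omega]
    congr 2 <;> omega
  have hFpos : (0 : ℚ) < (Nat.fib (n + 1) : ℚ) := by
    exact_mod_cast Nat.fib_pos.mpr (by omega)
  rw [colA, hB]
  have e1 : (((n + 1) * Nat.fib (n + 2) + (2 * n - 1) * Nat.fib (n + 1) : ℕ) : ℚ)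
      = 5 * (colT ((SimpleGraph.pathGraph n)ᶜ) : ℚ) := by
    exact_mod_cast congrArg (Nat.cast : ℕ → ℚ) h5T.symm
  have e2 : ((5 * Nat.fib (n + 1) : ℕ) : ℚ) = 5 * (Nat.fib (n + 1) : ℚ) := by
    push_cast; ring
  rw [e1, e2, mul_div_mul_left _ _ (by norm_num : (5 : ℚ) ≠ 0)]

end Final
end

section
/- For the complement of the cycle on n ≥ 4 vertices, A(complement of C_n) = n·F_{n+1}/L_n, where F_m is the mth Fibonacci number and L_n the nth Lucas number. -/
open Finset

/-- The Lucas numbers. -/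
def lucas : ℕ → ℕ
  | 0 => 2
  | 1 => 1
  | (n + 2) => lucas (n + 1) + lucas n

open Fin.NatCast Fin.CommRing

def NC (s : Finset ℕ) : Prop := ∀ i ∈ s, i + 1 ∉ s

instance : DecidablePred NC := fun s => by unfold NC; infer_instance

def pathSets (a b : ℕ) : Finset (Finset ℕ) := (Finset.Ico a b).powerset.filter NC

lemma NC_subset {s t : Finset ℕ} (h : s ⊆ t) (ht : NC t) : NC s :=
  fun i hi hi1 => ht i (h hi) (h hi1)

lemma pathSets_card : ∀ b a, (pathSets a b).card = Nat.fib (b - a + 2) := by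
  intro b
  induction b using Nat.strong_induction_on with
  | _ b ih =>
    intro a
    rcases lt_trichotomy b (a+1) with hb | hb | hb
    · have : Finset.Ico a b = ∅ := by simp; omega
      rw [pathSets, this]
      have : b - a = 0 := by omega
      rw [this]
      rw [Finset.powerset_empty, Finset.filter_singleton]
      rw [if_pos (by intro i hi; simp at hi)]
      rfl
    · subst hb
      have hIco : Finset.Ico a (a+1) = {a} := by simp
      rw [pathSets, hIco]
      have : a + 1 - a = 1 := by omega
      rw [this]
      rw [show ({a} : Finset ℕ).powerset = {∅, {a}} from rfl]
      rw [Finset.filter_insert]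
      rw [if_pos (by intro i hi; simp at hi), Finset.filter_singleton]
      rw [if_pos (by intro i hi h1; simp at hi h1; omega)]
      rfl
    · -- b ≥ a + 2
      obtain ⟨c, rfl⟩ : ∃ c, b = c + 2 := ⟨b - 2, by omega⟩
      have hca : a ≤ c := by omega
      have hsplit := Finset.card_filter_add_card_filter_not
        (s := pathSets a (c+2)) (p := fun s => c+1 ∈ s)
      have h1 : (pathSets a (c+2)).filter (fun s => ¬ c+1 ∈ s) = pathSets a (c+1) := by
        ext s
        simp only [pathSets, Finset.mem_filter, Finset.mem_powerset]
        constructor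
        · rintro ⟨⟨hs, hnc⟩, hne⟩
          refine ⟨fun x hx => ?_, hnc⟩
          have := hs hx
          simp only [Finset.mem_Ico] at this ⊢
          have : x ≠ c + 1 := fun h => hne (h ▸ hx)
          omega
        · rintro ⟨hs, hnc⟩
          refine ⟨⟨fun x hx => ?_, hnc⟩, fun hc => ?_⟩
          · have := hs hx; simp only [Finset.mem_Ico] at this ⊢; omega
          · have := hs hc; simp at this
      have h2 : ((pathSets a (c+2)).filter (fun s => c+1 ∈ s)).card = (pathSets a c).card := by
        refine Finset.card_bij' (fun s _ => s.erase (c+1)) (fun t _ => insert (c+1) t) ?_ ?_ ?_ ?_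
        · rintro s hs
          simp only [pathSets, Finset.mem_filter, Finset.mem_powerset] at hs ⊢
          obtain ⟨⟨hs1, hs2⟩, hs3⟩ := hs
          refine ⟨fun x hx => ?_, NC_subset (Finset.erase_subset _ _) hs2⟩
          simp only [Finset.mem_erase] at hx
          have hx2 := hs1 hx.2
          simp only [Finset.mem_Ico] at hx2 ⊢
          have : x ≠ c := by
            rintro rfl
            exact hs2 x hx.2 hs3
          omega
        · rintro t ht
          simp only [pathSets, Finset.mem_filter, Finset.mem_powerset] at ht ⊢
          obtain ⟨ht1, ht2⟩ := ht
          have hnotin : c + 1 ∉ t := fun h => by have := ht1 h; simp only [Finset.mem_Ico] at this; omega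
          refine ⟨⟨fun x hx => ?_, fun i hi hi1 => ?_⟩, by simp⟩
          · simp only [Finset.mem_insert] at hx
            rcases hx with rfl | hx
            · simp only [Finset.mem_Ico]; omega
            · have := ht1 hx; simp only [Finset.mem_Ico] at this ⊢; omega
          · simp only [Finset.mem_insert] at hi hi1
            rcases hi with rfl | hi
            · rcases hi1 with h | h
              · omega
              · have := ht1 h; simp only [Finset.mem_Ico] at this; omega
            · rcases hi1 with h | h
              · have := ht1 hi; simp only [Finset.mem_Ico] at this; omega
              · exact ht2 i hi h
        · rintro s hs
          simp only [Finset.mem_filter] at hs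
          exact Finset.insert_erase hs.2
        · rintro t ht
          simp only [pathSets, Finset.mem_filter, Finset.mem_powerset] at ht
          have hnotin : c + 1 ∉ t := fun h => by have := ht.1 h; simp only [Finset.mem_Ico] at this; omega
          exact Finset.erase_insert hnotin
      rw [h1] at hsplit
      rw [ih (c+1) (by omega) a] at hsplit
      rw [ih c (by omega) a] at h2
      rw [h2] at hsplit
      have k1 : Nat.fib (c - a + 2 + 2) = Nat.fib (c - a + 2) + Nat.fib (c - a + 2 + 1) :=
        Nat.fib_add_two
      have i1 : c - a + 2 + 2 = c + 2 - a + 2 := by omega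
      have i2 : c - a + 2 + 1 = c + 1 - a + 2 := by omega
      rw [i1, i2] at k1
      omega

lemma lucas_eq : ∀ m, lucas (m+1) = Nat.fib (m+2) + Nat.fib m := by
  intro m
  induction m using Nat.strong_induction_on with
  | _ m ih =>
    match m with
    | 0 => rfl
    | 1 => rfl
    | (k+2) =>
      show lucas (k+2) + lucas (k+1) = _
      rw [ih (k+1) (by omega), ih k (by omega)]
      rw [Nat.fib_add_two (n := k+2), Nat.fib_add_two (n := k)]
      have e : k+2+1 = k+1+2 := by omega
      rw [e]
      omega

def cInd {m : ℕ} (S : Finset (Fin (m+4))) : Prop := ∀ v ∈ S, v + 1 ∉ S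

instance {m : ℕ} : DecidablePred (cInd (m := m)) := fun S => by unfold cInd; infer_instance

def MM (m : ℕ) : Finset (Finset (Fin (m+4))) := Finset.univ.filter cInd

lemma valcast {m i : ℕ} (h : i < m+4) : ((i : ℕ) : Fin (m+4)).val = i := by
  rw [Fin.val_natCast, Nat.mod_eq_of_lt h]

lemma fin_eq_cast_val {m : ℕ} (v : Fin (m+4)) : v = ((v.val : ℕ) : Fin (m+4)) :=
  (Fin.cast_val_eq_self v).symm

lemma succ_of_val {m : ℕ} {v w : Fin (m+4)} (h : w.val = v.val + 1) : w = v + 1 := by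
  apply Fin.ext
  have hw := w.isLt
  rw [Fin.val_add, Fin.val_one, Nat.mod_eq_of_lt (by omega)]
  exact h

lemma mem_MM {m : ℕ} {S : Finset (Fin (m+4))} : S ∈ MM m ↔ cInd S := by
  simp [MM]

lemma image_val_NC {m : ℕ} {S : Finset (Fin (m+4))} (hS : cInd S) : NC (S.image Fin.val) := by
  intro i hi hi1
  simp only [Finset.mem_image] at hi hi1
  obtain ⟨v, hv, rfl⟩ := hi
  obtain ⟨w, hw, hw1⟩ := hi1
  exact hS v hv ((succ_of_val hw1) ▸ hw)

lemma image_cast_val {m : ℕ} {t : Finset ℕ} (ht : ∀ i ∈ t, i < m + 4) :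
    (t.image (Nat.cast : ℕ → Fin (m+4))).image Fin.val = t := by
  rw [Finset.image_image]
  exact (Finset.image_congr (g := id) (fun i hi => valcast (ht i hi))).trans Finset.image_id

lemma MM_notmem_card (m : ℕ) :
    ((MM m).filter (fun S => (0 : Fin (m+4)) ∉ S)).card = Nat.fib (m+5) := by
  have : Nat.fib (m+5) = Nat.fib (m + 4 - 1 + 2) := by congr 1
  rw [this, ← pathSets_card (m+4) 1]
  refine Finset.card_bij' (fun S _ => S.image Fin.val)
    (fun t _ => t.image (Nat.cast : ℕ → Fin (m+4))) ?_ ?_ ?_ ?_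
  · rintro S hS
    rw [Finset.mem_filter, mem_MM] at hS
    obtain ⟨h1, h2⟩ := hS
    rw [pathSets, Finset.mem_filter, Finset.mem_powerset]
    refine ⟨fun x hx => ?_, image_val_NC h1⟩
    simp only [Finset.mem_image] at hx
    obtain ⟨v, hv, rfl⟩ := hx
    simp only [Finset.mem_Ico]
    refine ⟨?_, v.isLt⟩
    rcases Nat.eq_zero_or_pos v.val with h | h
    · exact absurd ((Fin.ext h : v = 0) ▸ hv) h2
    · omega
  · rintro t ht
    rw [pathSets, Finset.mem_filter, Finset.mem_powerset] at ht
    obtain ⟨ht1, ht2⟩ := ht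
    have hbd : ∀ i ∈ t, 1 ≤ i ∧ i < m + 4 := fun i hi => by
      have := ht1 hi; simp only [Finset.mem_Ico] at this; exact this
    rw [Finset.mem_filter, mem_MM]
    constructor
    · intro v hv hv1
      simp only [Finset.mem_image] at hv hv1
      obtain ⟨i, hi, rfl⟩ := hv
      obtain ⟨j, hj, hj1⟩ := hv1
      have hiv := (hbd i hi)
      have hjv := (hbd j hj)
      have hcast : ((i : ℕ) : Fin (m+4)) + 1 = ((i + 1 : ℕ) : Fin (m+4)) := by push_cast; ring
      rw [hcast] at hj1
      have := congrArg Fin.val hj1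
      rw [valcast hjv.2, Fin.val_natCast] at this
      rcases Nat.lt_or_ge (i+1) (m+4) with h | h
      · rw [Nat.mod_eq_of_lt h] at this
        exact ht2 i hi (this ▸ hj)
      · have : (i+1) % (m+4) = 0 := by
          have : i + 1 = m + 4 := by omega
          simp [this]
        omega
    · intro h0
      simp only [Finset.mem_image] at h0
      obtain ⟨i, hi, hi0⟩ := h0
      have h1 : i = 0 := by
        have := congrArg Fin.val hi0
        rwa [valcast (hbd i hi).2, Fin.val_zero] at this
      have := (hbd i hi).1
      omega
  · rintro S _
    rw [Finset.image_image]
    exact (Finset.image_congr (g := id) (fun v _ => Fin.cast_val_eq_self v)).trans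
      Finset.image_id
  · rintro t ht
    rw [pathSets, Finset.mem_filter, Finset.mem_powerset] at ht
    exact image_cast_val (fun i hi => by have := ht.1 hi; simp only [Finset.mem_Ico] at this; omega)

lemma MM_mem_card (m : ℕ) :
    ((MM m).filter (fun S => (0 : Fin (m+4)) ∈ S)).card = Nat.fib (m+3) := by
  have h0 : Nat.fib (m+3) = Nat.fib (m + 3 - 2 + 2) := by congr 1
  rw [h0, ← pathSets_card (m+3) 2]
  refine Finset.card_bij' (fun S _ => (S.erase 0).image Fin.val)
    (fun t _ => insert 0 (t.image (Nat.cast : ℕ → Fin (m+4)))) ?_ ?_ ?_ ?_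
  · rintro S hS
    rw [Finset.mem_filter, mem_MM] at hS
    obtain ⟨h1, h2⟩ := hS
    rw [pathSets, Finset.mem_filter, Finset.mem_powerset]
    refine ⟨fun x hx => ?_, image_val_NC (fun v hv hv1 =>
      h1 v (Finset.mem_of_mem_erase hv) (Finset.mem_of_mem_erase hv1))⟩
    simp only [Finset.mem_image, Finset.mem_erase] at hx
    obtain ⟨v, ⟨hv0, hv⟩, rfl⟩ := hx
    simp only [Finset.mem_Ico]
    have hlt := v.isLt
    have hne0 : v.val ≠ 0 := fun h => hv0 (Fin.ext h)
    have hne1 : v.val ≠ 1 := by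
      intro h
      have : v = 0 + 1 := by
        apply Fin.ext
        rw [h]
        rw [Fin.val_add, Fin.val_zero, Fin.val_one, Nat.mod_eq_of_lt (by omega)]
      exact h1 0 h2 (this ▸ hv)
    have hnelast : v.val ≠ m + 3 := by
      intro h
      have : v + 1 = 0 := by
        apply Fin.ext
        rw [Fin.val_add, Fin.val_one, Fin.val_zero, h]
        simp
      exact h1 v hv (this ▸ h2)
    omega
  · rintro t ht
    rw [pathSets, Finset.mem_filter, Finset.mem_powerset] at ht
    obtain ⟨ht1, ht2⟩ := ht
    have hbd : ∀ i ∈ t, 2 ≤ i ∧ i < m + 3 := fun i hi => by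
      have := ht1 hi; simp only [Finset.mem_Ico] at this; exact this
    rw [Finset.mem_filter, mem_MM]
    have hcastval : ∀ i ∈ t, (((i : ℕ) : Fin (m+4))).val = i := fun i hi =>
      valcast (by have := hbd i hi; omega)
    refine ⟨?_, Finset.mem_insert_self _ _⟩
    intro v hv hv1
    simp only [Finset.mem_insert, Finset.mem_image] at hv hv1
    rcases hv with rfl | ⟨i, hi, rfl⟩
    · rw [zero_add] at hv1
      rcases hv1 with h | ⟨j, hj, hj1⟩
      · have := congrArg Fin.val h
        rw [Fin.val_one, Fin.val_zero] at this
        omega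
      · have := congrArg Fin.val hj1
        rw [hcastval j hj, Fin.val_one] at this
        have := hbd j hj
        omega
    · have hcast : ((i : ℕ) : Fin (m+4)) + 1 = ((i + 1 : ℕ) : Fin (m+4)) := by push_cast; ring
      rw [hcast] at hv1
      have hi1val : (((i+1 : ℕ) : Fin (m+4))).val = i + 1 := valcast (by have := hbd i hi; omega)
      rcases hv1 with h | ⟨j, hj, hj1⟩
      · have := congrArg Fin.val h
        rw [hi1val, Fin.val_zero] at this
        omega
      · have := congrArg Fin.val hj1
        rw [hcastval j hj, hi1val] at this
        exact ht2 i hi (this ▸ hj)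
  · rintro S hS
    rw [Finset.mem_filter, mem_MM] at hS
    rw [Finset.image_image]
    have he : (S.erase 0).image (Nat.cast ∘ Fin.val) = S.erase 0 :=
      (Finset.image_congr (g := id) (fun v _ => Fin.cast_val_eq_self v)).trans Finset.image_id
    rw [he]
    exact Finset.insert_erase hS.2
  · rintro t ht
    rw [pathSets, Finset.mem_filter, Finset.mem_powerset] at ht
    obtain ⟨ht1, ht2⟩ := ht
    have hbd : ∀ i ∈ t, 2 ≤ i ∧ i < m + 3 := fun i hi => by
      have := ht1 hi; simp only [Finset.mem_Ico] at this; exact this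
    rw [Finset.erase_insert]
    · exact image_cast_val (fun i hi => by have := hbd i hi; omega)
    · intro h0
      simp only [Finset.mem_image] at h0
      obtain ⟨i, hi, hi0⟩ := h0
      have := congrArg Fin.val hi0
      rw [valcast (by have := hbd i hi; omega : i < m + 4), Fin.val_zero] at this
      have := hbd i hi
      omega

lemma mem_image_sub {m : ℕ} {S : Finset (Fin (m+4))} {v u : Fin (m+4)} :
    u ∈ S.image (· - v) ↔ u + v ∈ S := by
  simp only [Finset.mem_image]
  constructor
  · rintro ⟨x, hx, rfl⟩
    rwa [sub_add_cancel]
  · intro h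
    exact ⟨u + v, h, by rw [add_sub_cancel_right]⟩

lemma rot_card (m : ℕ) (v : Fin (m+4)) :
    ((MM m).filter (fun S => v ∈ S)).card
      = ((MM m).filter (fun S => (0 : Fin (m+4)) ∈ S)).card := by
  refine Finset.card_bij' (fun S _ => S.image (· - v)) (fun T _ => T.image (· + v)) ?_ ?_ ?_ ?_
  · rintro S hS
    rw [Finset.mem_filter, mem_MM] at hS ⊢
    obtain ⟨h1, h2⟩ := hS
    refine ⟨fun u hu hu1 => ?_, by rw [mem_image_sub, zero_add]; exact h2⟩
    rw [mem_image_sub] at hu hu1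
    have : u + 1 + v = u + v + 1 := by ring
    rw [this] at hu1
    exact h1 _ hu hu1
  · rintro T hT
    rw [Finset.mem_filter, mem_MM] at hT ⊢
    obtain ⟨h1, h2⟩ := hT
    have hmem : ∀ u : Fin (m+4), u ∈ T.image (· + v) ↔ u - v ∈ T := by
      intro u
      simp only [Finset.mem_image]
      constructor
      · rintro ⟨x, hx, rfl⟩; rwa [add_sub_cancel_right]
      · intro h; exact ⟨u - v, h, by rw [sub_add_cancel]⟩
    refine ⟨fun u hu hu1 => ?_, ?_⟩
    · rw [hmem] at hu hu1
      have : u + 1 - v = u - v + 1 := by ring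
      rw [this] at hu1
      exact h1 _ hu hu1
    · rw [hmem, sub_self]
      exact h2
  · rintro S _
    rw [Finset.image_image]
    refine (Finset.image_congr (g := id) (fun x _ => ?_)).trans Finset.image_id
    simp [sub_add_cancel]
  · rintro T _
    rw [Finset.image_image]
    refine (Finset.image_congr (g := id) (fun x _ => ?_)).trans Finset.image_id
    simp [add_sub_cancel_right]

lemma MM_card (m : ℕ) : (MM m).card = lucas (m+4) := by
  have h := Finset.card_filter_add_card_filter_not
    (s := MM m) (p := fun S => (0 : Fin (m+4)) ∈ S)
  rw [MM_mem_card] at h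
  have h2 : ((MM m).filter (fun S => ¬ (0 : Fin (m+4)) ∈ S)).card = Nat.fib (m+5) :=
    MM_notmem_card m
  rw [h2] at h
  rw [lucas_eq (m+3)]
  have : m + 3 + 2 = m + 5 := by omega
  rw [this]
  omega

lemma MM_sum (m : ℕ) : ∑ S ∈ MM m, S.card = (m+4) * Nat.fib (m+3) := by
  have hcard : ∀ S : Finset (Fin (m+4)), S.card = ∑ v : Fin (m+4), if v ∈ S then 1 else 0 := by
    intro S
    rw [← Finset.card_filter]
    congr 1
    ext v
    simp
  calc ∑ S ∈ MM m, S.card = ∑ S ∈ MM m, ∑ v : Fin (m+4), if v ∈ S then 1 else 0 := by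
        exact Finset.sum_congr rfl (fun S _ => hcard S)
    _ = ∑ v : Fin (m+4), ∑ S ∈ MM m, if v ∈ S then 1 else 0 := Finset.sum_comm
    _ = ∑ v : Fin (m+4), ((MM m).filter (fun S => v ∈ S)).card := by
        exact Finset.sum_congr rfl (fun v _ => (Finset.card_filter _ _).symm)
    _ = ∑ _v : Fin (m+4), Nat.fib (m+3) := by
        refine Finset.sum_congr rfl (fun v _ => ?_)
        rw [rot_card, MM_mem_card]
    _ = (m+4) * Nat.fib (m+3) := by
        rw [Finset.sum_const, Finset.card_univ, Fintype.card_fin, smul_eq_mul]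

section Fin4
variable {m : ℕ}

lemma fin_val_two : ((2 : Fin (m+4))).val = 2 := by
  rw [show (2 : Fin (m+4)) = 1 + 1 by norm_num, Fin.val_add, Fin.val_one,
    Nat.mod_eq_of_lt (by omega)]

lemma fin_val_three : ((3 : Fin (m+4))).val = 3 := by
  rw [show (3 : Fin (m+4)) = 2 + 1 by norm_num, Fin.val_add, fin_val_two, Fin.val_one,
    Nat.mod_eq_of_lt (by omega)]

lemma fin_add_cancel {v : Fin (m+4)} {c : Fin (m+4)} (h : v + c = v) : c = 0 := by
  have := add_left_cancel (a := v) (b := c) (c := 0) (by rwa [add_zero])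
  exact this

lemma add_one_ne (v : Fin (m+4)) : v + 1 ≠ v := fun h => by
  have := congrArg Fin.val (fin_add_cancel h)
  rw [Fin.val_one, Fin.val_zero] at this
  omega

lemma add_two_ne (v : Fin (m+4)) : v + 2 ≠ v := fun h => by
  have := congrArg Fin.val (fin_add_cancel h)
  rw [fin_val_two, Fin.val_zero] at this
  omega

lemma add_three_ne (v : Fin (m+4)) : v + 3 ≠ v := fun h => by
  have := congrArg Fin.val (fin_add_cancel h)
  rw [fin_val_three, Fin.val_zero] at this
  omega

lemma pair_succ_inj {u v : Fin (m+4)} (h : ({v, v+1} : Finset (Fin (m+4))) = {u, u+1}) :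
    v = u := by
  have hv : v ∈ ({u, u+1} : Finset (Fin (m+4))) := h ▸ Finset.mem_insert_self v {v+1}
  have hv1 : v + 1 ∈ ({u, u+1} : Finset (Fin (m+4))) := by
    rw [← h]; exact Finset.mem_insert_of_mem (Finset.mem_singleton_self _)
  simp only [Finset.mem_insert, Finset.mem_singleton] at hv hv1
  rcases hv with rfl | rfl
  · rfl
  · exfalso
    rcases hv1 with h1 | h1
    · rw [show u + 1 + 1 = u + 2 by ring] at h1
      exact add_two_ne u h1
    · exact add_one_ne (u+1) h1

lemma adj_succ (v : Fin (m+4)) : (SimpleGraph.cycleGraph (m+4)).Adj v (v+1) := by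
  have : (SimpleGraph.cycleGraph (m+2+2)).Adj v (v+1) := by
    rw [SimpleGraph.cycleGraph_adj]
    right
    rw [add_sub_cancel_left]
  exact this

lemma adj_iff {u v : Fin (m+4)} :
    (SimpleGraph.cycleGraph (m+4)).Adj u v ↔ u = v + 1 ∨ v = u + 1 := by
  have : (SimpleGraph.cycleGraph (m+2+2)).Adj u v ↔ u - v = 1 ∨ v - u = 1 :=
    SimpleGraph.cycleGraph_adj
  rw [show (SimpleGraph.cycleGraph (m+4)).Adj u v
      = (SimpleGraph.cycleGraph (m+2+2)).Adj u v from rfl, this]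
  constructor
  · rintro (h | h)
    · left; rw [← h]; ring
    · right; rw [← h]; ring
  · rintro (rfl | rfl)
    · left; rw [add_sub_cancel_left]
    · right; rw [add_sub_cancel_left]

/-- Build a finpartition of `univ` from a "class of" function. -/
def mkPart (f : Fin (m+4) → Finset (Fin (m+4)))
    (hmem : ∀ v, v ∈ f v) (hcong : ∀ u v, u ∈ f v → f u = f v) :
    Finpartition (Finset.univ : Finset (Fin (m+4))) where
  parts := Finset.univ.image f
  supIndep := by
    rw [Finset.supIndep_iff_pairwiseDisjoint]
    intro p hp q hq hpq
    simp only [Finset.coe_image, Set.mem_image] at hp hq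
    obtain ⟨u, _, rfl⟩ := hp
    obtain ⟨v, _, rfl⟩ := hq
    rw [Function.onFun, Finset.disjoint_left]
    intro x hxp hxq
    exact hpq ((hcong x u hxp).symm.trans (hcong x v hxq))
  sup_parts := by
    apply le_antisymm
    · exact Finset.sup_le (fun p _ => le_top)
    · intro v _
      rw [Finset.mem_sup]
      exact ⟨f v, Finset.mem_image_of_mem f (Finset.mem_univ v), hmem v⟩
  bot_notMem := by
    rw [Finset.mem_image]
    rintro ⟨v, _, hv⟩
    have h2 := hmem v
    rw [hv, Finset.bot_eq_empty] at h2
    exact Finset.notMem_empty v h2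

lemma mkPart_parts (f : Fin (m+4) → Finset (Fin (m+4))) (hmem) (hcong) :
    (mkPart f hmem hcong).parts = Finset.univ.image f := rfl

def fS (S : Finset (Fin (m+4))) (v : Fin (m+4)) : Finset (Fin (m+4)) :=
  if v ∈ S then {v, v + 1} else if v - 1 ∈ S then {v - 1, v} else {v}

lemma not_both {S : Finset (Fin (m+4))} (hS : cInd S) {v : Fin (m+4)} (h : v - 1 ∈ S) :
    v ∉ S := by
  have := hS (v-1) h
  rwa [sub_add_cancel] at this

lemma fS_mem (S : Finset (Fin (m+4))) (v : Fin (m+4)) : v ∈ fS S v := by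
  unfold fS
  split
  · exact Finset.mem_insert_self _ _
  · split
    · exact Finset.mem_insert_of_mem (Finset.mem_singleton_self _)
    · exact Finset.mem_singleton_self _

lemma fS_cong {S : Finset (Fin (m+4))} (hS : cInd S) :
    ∀ u v, u ∈ fS S v → fS S u = fS S v := by
  intro u v hu
  unfold fS at hu ⊢
  by_cases hv : v ∈ S
  · rw [if_pos hv] at hu ⊢
    simp only [Finset.mem_insert, Finset.mem_singleton] at hu
    rcases hu with rfl | rfl
    · rw [if_pos hv]
    · have h1 : v + 1 ∉ S := hS v hv
      rw [if_neg h1, add_sub_cancel_right, if_pos hv]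
  · rw [if_neg hv] at hu ⊢
    by_cases hv1 : v - 1 ∈ S
    · rw [if_pos hv1] at hu ⊢
      simp only [Finset.mem_insert, Finset.mem_singleton] at hu
      rcases hu with rfl | rfl
      · rw [if_pos hv1, sub_add_cancel]
      · rw [if_neg hv, if_pos hv1]
    · rw [if_neg hv1] at hu ⊢
      simp only [Finset.mem_singleton] at hu
      subst hu
      rw [if_neg hv, if_neg hv1]

def Pof (S : Finset (Fin (m+4))) (hS : cInd S) :
    Finpartition (Finset.univ : Finset (Fin (m+4))) :=
  mkPart (fS S) (fS_mem S) (fS_cong hS)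

lemma Pof_parts {S : Finset (Fin (m+4))} (hS : cInd S) :
    (Pof S hS).parts = Finset.univ.image (fS S) := rfl

lemma Pof_stable {S : Finset (Fin (m+4))} (hS : cInd S) :
    IsStablePartition ((SimpleGraph.cycleGraph (m+4))ᶜ) (Pof S hS) := by
  intro p hp u hu w hw hadj
  rw [SimpleGraph.compl_adj] at hadj
  obtain ⟨hne, hno⟩ := hadj
  apply hno
  rw [Pof_parts, Finset.mem_image] at hp
  obtain ⟨v, _, rfl⟩ := hp
  unfold fS at hu hw
  by_cases hvS : v ∈ S
  · rw [if_pos hvS] at hu hw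
    simp only [Finset.mem_insert, Finset.mem_singleton] at hu hw
    rcases hu with hu | hu <;> rcases hw with hw | hw
    · rw [hu, hw] at hne; exact absurd rfl hne
    · rw [hu, hw]; exact adj_succ v
    · rw [hu, hw]; exact (adj_succ v).symm
    · rw [hu, hw] at hne; exact absurd rfl hne
  · rw [if_neg hvS] at hu hw
    by_cases hv1 : v - 1 ∈ S
    · rw [if_pos hv1] at hu hw
      simp only [Finset.mem_insert, Finset.mem_singleton] at hu hw
      rcases hu with hu | hu <;> rcases hw with hw | hw
      · rw [hu, hw] at hne; exact absurd rfl hne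
      · rw [hu, hw]
        have h3 := adj_succ (v - 1)
        rwa [sub_add_cancel] at h3
      · rw [hu, hw]
        have h3 := (adj_succ (v - 1)).symm
        rwa [sub_add_cancel] at h3
      · rw [hu, hw] at hne; exact absurd rfl hne
    · rw [if_neg hv1] at hu hw
      simp only [Finset.mem_singleton] at hu hw
      rw [hu, hw] at hne
      exact absurd rfl hne

lemma Pof_card {S : Finset (Fin (m+4))} (hS : cInd S) :
    (Pof S hS).parts.card = (m + 4) - S.card := by
  rw [Pof_parts]
  set T : Finset (Fin (m+4)) := Finset.univ.filter (fun v => ¬ v - 1 ∈ S) with hT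
  have himg : Finset.univ.image (fS S) = T.image (fS S) := by
    apply le_antisymm
    · intro p hp
      rw [Finset.mem_image] at hp ⊢
      obtain ⟨v, _, rfl⟩ := hp
      by_cases hv1 : v - 1 ∈ S
      · refine ⟨v - 1, ?_, ?_⟩
        · rw [hT, Finset.mem_filter]
          refine ⟨Finset.mem_univ _, fun h => ?_⟩
          exact not_both hS h hv1
        · apply fS_cong hS
          unfold fS
          rw [if_neg (not_both hS hv1), if_pos hv1]
          exact Finset.mem_insert_self _ _
      · exact ⟨v, by rw [hT, Finset.mem_filter]; exact ⟨Finset.mem_univ _, hv1⟩, rfl⟩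
    · exact Finset.image_subset_image (Finset.filter_subset _ _)
  rw [himg]
  have hinj : Set.InjOn (fS S) T := by
    intro u hu v hv huv
    simp only [hT, Finset.coe_filter, Set.mem_setOf_eq] at hu hv
    have key : ∀ w : Fin (m+4), ¬ w - 1 ∈ S → ∀ x ∈ fS S w, ¬ x - 1 ∈ S → x = w := by
      intro w hw x hx hx1
      unfold fS at hx
      by_cases hwS : w ∈ S
      · rw [if_pos hwS] at hx
        simp only [Finset.mem_insert, Finset.mem_singleton] at hx
        rcases hx with rfl | rfl
        · rfl
        · rw [add_sub_cancel_right] at hx1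
          exact absurd hwS hx1
      · rw [if_neg hwS, if_neg hw] at hx
        simp only [Finset.mem_singleton] at hx
        exact hx
    have h1 : u ∈ fS S v := by
      rw [← huv]; exact fS_mem S u
    exact key v hv.2 u h1 hu.2
  rw [Finset.card_image_of_injOn hinj]
  have hpos : (Finset.univ.filter (fun v : Fin (m+4) => v - 1 ∈ S)).card = S.card := by
    have : Finset.univ.filter (fun v : Fin (m+4) => v - 1 ∈ S) = S.image (· + 1) := by
      ext v
      simp only [Finset.mem_filter, Finset.mem_univ, true_and, Finset.mem_image]
      constructor
      · intro h
        exact ⟨v - 1, h, sub_add_cancel v 1⟩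
      · rintro ⟨x, hx, rfl⟩
        rwa [add_sub_cancel_right]
    rw [this, Finset.card_image_of_injective _ (add_left_injective 1)]
  have hsplit := Finset.card_filter_add_card_filter_not
    (s := (Finset.univ : Finset (Fin (m+4)))) (p := fun v => v - 1 ∈ S)
  rw [Finset.card_univ, Fintype.card_fin, hpos] at hsplit
  have hcard_le : S.card ≤ m + 4 := by
    have := Finset.card_le_univ S
    rwa [Fintype.card_fin] at this
  rw [← hT] at hsplit
  omega

lemma mem_Pof_iff {S : Finset (Fin (m+4))} (hS : cInd S) {v : Fin (m+4)} :
    v ∈ S ↔ ({v, v + 1} : Finset (Fin (m+4))) ∈ (Pof S hS).parts := by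
  rw [Pof_parts, Finset.mem_image]
  constructor
  · intro hv
    exact ⟨v, Finset.mem_univ _, by unfold fS; rw [if_pos hv]⟩
  · rintro ⟨u, _, hu⟩
    unfold fS at hu
    split at hu
    · rename_i huS
      rwa [pair_succ_inj hu] at huS
    · split at hu
      · rename_i _ huS
        rw [show ({u - 1, u} : Finset (Fin (m+4))) = {u - 1, (u - 1) + 1} by
          rw [sub_add_cancel]] at hu
        rwa [pair_succ_inj hu] at huS
      · exfalso
        have h1 : v ∈ ({u} : Finset (Fin (m+4))) := by
          rw [hu]; exact Finset.mem_insert_self _ _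
        have h2 : v + 1 ∈ ({u} : Finset (Fin (m+4))) := by
          rw [hu]; exact Finset.mem_insert_of_mem (Finset.mem_singleton_self _)
        simp only [Finset.mem_singleton] at h1 h2
        rw [h1] at h2
        exact add_one_ne u h2

lemma finpart_eq_of_subset {α : Type*} [DecidableEq α] {s : Finset α}
    (P Q : Finpartition s) (h : Q.parts ⊆ P.parts) : Q = P := by
  ext1
  apply Finset.Subset.antisymm h
  intro p hp
  obtain ⟨v, hv⟩ := P.nonempty_of_mem_parts hp
  have hvs : v ∈ s := P.le hp hv
  obtain ⟨q, hq, hvq⟩ := Q.exists_mem hvs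
  rwa [P.eq_of_mem_parts (h hq) hp hvq hv] at hq

lemma part_pair {P : Finpartition (Finset.univ : Finset (Fin (m+4)))}
    (hadj : ∀ p ∈ P.parts, ∀ u ∈ p, ∀ w ∈ p, u ≠ w → (SimpleGraph.cycleGraph (m+4)).Adj u w)
    {p : Finset (Fin (m+4))} (hp : p ∈ P.parts) {v : Fin (m+4)}
    (hv : v ∈ p) (hv1 : v + 1 ∈ p) : p = {v, v + 1} := by
  ext w
  simp only [Finset.mem_insert, Finset.mem_singleton]
  constructor
  · intro hw
    by_contra hne
    push_neg at hne
    obtain ⟨hne1, hne2⟩ := hne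
    have ha1 := adj_iff.mp (hadj p hp w hw v hv hne1)
    have ha2 := adj_iff.mp (hadj p hp w hw (v+1) hv1 hne2)
    rcases ha1 with h1 | h1
    · exact hne2 h1
    · rcases ha2 with h2 | h2
      · rw [show v + 1 + 1 = v + 2 by ring] at h2
        rw [h2, show v + 2 + 1 = v + 3 by ring] at h1
        exact add_three_ne v h1.symm
      · exact hne1 (add_right_cancel h2).symm
  · rintro (rfl | rfl)
    · exact hv
    · exact hv1

lemma stable_eq_Pof {P : Finpartition (Finset.univ : Finset (Fin (m+4)))}
    (hP : IsStablePartition ((SimpleGraph.cycleGraph (m+4))ᶜ) P) :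
    ∃ (S : Finset (Fin (m+4))) (hS : cInd S), P = Pof S hS := by
  have hadj : ∀ p ∈ P.parts, ∀ u ∈ p, ∀ w ∈ p, u ≠ w →
      (SimpleGraph.cycleGraph (m+4)).Adj u w := by
    intro p hp u hu w hw hne
    have := hP p hp u hu w hw
    rw [SimpleGraph.compl_adj] at this
    push_neg at this
    exact this hne
  set SP : Finset (Fin (m+4)) :=
    Finset.univ.filter (fun v => ({v, v + 1} : Finset (Fin (m+4))) ∈ P.parts) with hSPdef
  have mem_SP : ∀ v : Fin (m+4), v ∈ SP ↔ ({v, v + 1} : Finset (Fin (m+4))) ∈ P.parts := by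
    intro v
    rw [hSPdef, Finset.mem_filter]
    simp
  have hSP : cInd SP := by
    intro v hv hv1
    rw [mem_SP] at hv hv1
    have h2 : v + 1 ∈ ({v, v+1} : Finset (Fin (m+4))) :=
      Finset.mem_insert_of_mem (Finset.mem_singleton_self _)
    have h3 : v + 1 ∈ ({v+1, v+1+1} : Finset (Fin (m+4))) := Finset.mem_insert_self _ _
    have := P.eq_of_mem_parts hv hv1 h2 h3
    have h4 : v ∈ ({v+1, v+1+1} : Finset (Fin (m+4))) := by
      rw [← this]; exact Finset.mem_insert_self _ _
    simp only [Finset.mem_insert, Finset.mem_singleton] at h4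
    rcases h4 with h4 | h4
    · exact add_one_ne v h4.symm
    · rw [show v + 1 + 1 = v + 2 by ring] at h4
      exact add_two_ne v h4.symm
  refine ⟨SP, hSP, (finpart_eq_of_subset P (Pof SP hSP) ?_).symm⟩
  intro p hp
  rw [Pof_parts, Finset.mem_image] at hp
  obtain ⟨v, _, rfl⟩ := hp
  unfold fS
  by_cases hvS : v ∈ SP
  · rw [if_pos hvS]
    exact (mem_SP v).mp hvS
  · rw [if_neg hvS]
    by_cases hv1 : v - 1 ∈ SP
    · rw [if_pos hv1]
      have := (mem_SP (v-1)).mp hv1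
      rwa [sub_add_cancel] at this
    · rw [if_neg hv1]
      obtain ⟨p, hp, hvp⟩ := P.exists_mem (Finset.mem_univ v)
      have hps : p = {v} := by
        ext u
        simp only [Finset.mem_singleton]
        constructor
        · intro hu
          by_contra hne
          have ha := adj_iff.mp (hadj p hp u hu v hvp hne)
          rcases ha with ha | ha
          · exfalso
            apply hvS
            rw [mem_SP]
            rw [← part_pair hadj hp hvp (ha ▸ hu)]
            exact hp
          · exfalso
            apply hv1
            rw [mem_SP, sub_add_cancel]
            have huv : v = u + 1 := ha
            rw [show v - 1 = u by rw [huv, add_sub_cancel_right]]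
            rw [huv, ← part_pair hadj hp hu (huv ▸ hvp)]
            exact hp
        · rintro rfl
          exact hvp
      rw [← hps]
      exact hp

lemma Pof_inj {S₁ S₂ : Finset (Fin (m+4))} (h₁ : cInd S₁) (h₂ : cInd S₂)
    (h : Pof S₁ h₁ = Pof S₂ h₂) : S₁ = S₂ := by
  ext v
  rw [mem_Pof_iff h₁, mem_Pof_iff h₂, h]

lemma cInd_empty : cInd (∅ : Finset (Fin (m+4))) := fun v hv => absurd hv (Finset.notMem_empty v)

noncomputable def PofT (S : Finset (Fin (m+4))) :
    Finpartition (Finset.univ : Finset (Fin (m+4))) :=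
  if h : cInd S then Pof S h else Pof ∅ cInd_empty

lemma PofT_eq {S : Finset (Fin (m+4))} (hS : cInd S) : PofT S = Pof S hS := dif_pos hS

end Fin4

lemma colS_eq_s16 (m k : ℕ) : colS ((SimpleGraph.cycleGraph (m+4))ᶜ) k
    = ((MM m).filter (fun S => (m+4) - S.card = k)).card := by
  unfold colS
  have hset : {P : Finpartition (Finset.univ : Finset (Fin (m+4))) |
      IsStablePartition ((SimpleGraph.cycleGraph (m+4))ᶜ) P ∧ P.parts.card = k}
      = ↑(((MM m).filter (fun S => (m+4) - S.card = k)).image PofT) := by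
    ext P
    simp only [Set.mem_setOf_eq, Finset.coe_image, Set.mem_image, Finset.mem_coe,
      Finset.mem_filter, mem_MM]
    constructor
    · rintro ⟨hPstable, hPcard⟩
      obtain ⟨S, hS, rfl⟩ := stable_eq_Pof hPstable
      exact ⟨S, ⟨hS, by rwa [Pof_card hS] at hPcard⟩, PofT_eq hS⟩
    · rintro ⟨S, ⟨hS, hcard⟩, rfl⟩
      rw [PofT_eq hS]
      exact ⟨Pof_stable hS, by rw [Pof_card hS]; exact hcard⟩
  rw [hset, Set.ncard_coe_finset]
  apply Finset.card_image_of_injOn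
  intro S₁ h1 S₂ h2 he
  simp only [Finset.coe_filter, Set.mem_setOf_eq, mem_MM] at h1 h2
  rw [PofT_eq h1.1, PofT_eq h2.1] at he
  exact Pof_inj h1.1 h2.1 he

lemma colB_eq_s16 (m : ℕ) : colB ((SimpleGraph.cycleGraph (m+4))ᶜ) = lucas (m+4) := by
  unfold colB
  simp only [Fintype.card_fin]
  have hmap : ∀ S ∈ MM m, (m+4) - S.card ∈ Finset.range (m+4+1) := by
    intro S _
    rw [Finset.mem_range]
    omega
  have h := Finset.card_eq_sum_card_fiberwise hmap
  rw [← MM_card m, h]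
  exact Finset.sum_congr rfl (fun k _ => colS_eq_s16 m k)

lemma colT_eq_s16 (m : ℕ) : colT ((SimpleGraph.cycleGraph (m+4))ᶜ) = (m+4) * Nat.fib (m+5) := by
  unfold colT
  simp only [Fintype.card_fin]
  have hmap : ∀ S ∈ MM m, (m+4) - S.card ∈ Finset.range (m+4+1) := by
    intro S _
    rw [Finset.mem_range]
    omega
  have h1 : ∑ k ∈ Finset.range (m+4+1),
        (∑ S ∈ (MM m).filter (fun S => (m+4) - S.card = k), ((m+4) - S.card))
      = ∑ S ∈ MM m, ((m+4) - S.card) :=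
    Finset.sum_fiberwise_of_maps_to hmap _
  have h2 : ∀ k ∈ Finset.range (m+4+1),
      (∑ S ∈ (MM m).filter (fun S => (m+4) - S.card = k), ((m+4) - S.card))
        = k * ((MM m).filter (fun S => (m+4) - S.card = k)).card := by
    intro k _
    rw [Finset.sum_congr rfl (fun S hS => (Finset.mem_filter.mp hS).2)]
    rw [Finset.sum_const, smul_eq_mul, mul_comm]
  have h3 : ∑ k ∈ Finset.range (m+4+1), k * colS ((SimpleGraph.cycleGraph (m+4))ᶜ) k
      = ∑ S ∈ MM m, ((m+4) - S.card) := by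
    rw [← h1]
    refine Finset.sum_congr rfl (fun k hk => ?_)
    rw [colS_eq_s16 m k, h2 k hk]
  rw [h3]
  have hle : ∀ S ∈ MM m, S.card ≤ m + 4 := by
    intro S _
    have := Finset.card_le_univ S
    rwa [Fintype.card_fin] at this
  have h4 : (∑ S ∈ MM m, ((m+4) - S.card)) + (∑ S ∈ MM m, S.card)
      = ∑ S ∈ MM m, (m+4) := by
    rw [← Finset.sum_add_distrib]
    exact Finset.sum_congr rfl (fun S hS => Nat.sub_add_cancel (hle S hS))
  rw [Finset.sum_const, smul_eq_mul, MM_card, MM_sum] at h4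
  have h5 : lucas (m+4) * (m+4) = (m+4) * Nat.fib (m+5) + (m+4) * Nat.fib (m+3) := by
    have := lucas_eq (m+3)
    rw [show m+3+1 = m+4 from rfl, show m+3+2 = m+5 from rfl] at this
    rw [this]
    ring
  omega

theorem stmt16 (n : ℕ) (hn : 4 ≤ n) :
    colA ((SimpleGraph.cycleGraph n)ᶜ) =
      ((n * Nat.fib (n + 1) : ℕ) : ℚ) / (lucas n : ℚ) := by
  obtain ⟨m, rfl⟩ : ∃ m, n = m + 4 := ⟨n - 4, by omega⟩
  unfold colA
  rw [colT_eq_s16, colB_eq_s16]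
end
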